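/- arXiv:1211.0168 — 9 statements merged into one kernel-verified Lean document; each statement's English description precedes it below -/
import Mathlib

section
/- A set S ⊆ V_d is t-Ramsey if and only if S is t-layer-Ramsey. -/
/-- An embedding of the hypercube `Q_d` into `Q_n`: an injective map on vertex sets
(identified with finite subsets of `Fin d`, resp. `Fin n`) preserving the edges,
where two vertices are adjacent iff their symmetric difference has exactly one element. -/
def IsCubeEmbedding {d n : ℕ} (ψ : Finset (Fin d) → Finset (Fin n)) : Prop :=
  Function.Injective ψ ∧
    ∀ A B : Finset (Fin d), (symmDiff A B).card = 1 → (symmDiff (ψ A) (ψ B)).card = 1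

/-- `S ⊆ V_n` contains a copy of `F ⊆ V_d`. -/
def ContainsCopy {d n : ℕ} (F : Set (Finset (Fin d))) (S : Set (Finset (Fin n))) : Prop :=
  ∃ ψ : Finset (Fin d) → Finset (Fin n), IsCubeEmbedding ψ ∧ ∀ A ∈ F, ψ A ∈ S

/-- `F ⊆ V_d` is `t`-Ramsey: for all sufficiently large `n`, every `t`-coloring of `Q_n`
contains a monochromatic copy of `F`. -/
def IsRamsey (t d : ℕ) (F : Set (Finset (Fin d))) : Prop :=
  ∃ n₀ : ℕ, ∀ n, n₀ ≤ n → ∀ c : Finset (Fin n) → Fin t,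
    ∃ i : Fin t, ContainsCopy F {A | c A = i}

/-- A coloring of `Q_n` is layered if it is constant on each layer (sets of equal size). -/
def IsLayered {n t : ℕ} (c : Finset (Fin n) → Fin t) : Prop :=
  ∀ A B : Finset (Fin n), A.card = B.card → c A = c B

/-- `F ⊆ V_d` is `t`-layer-Ramsey: for all sufficiently large `n`, every layered
`t`-coloring of `Q_n` contains a monochromatic copy of `F`. -/
def IsLayerRamsey (t d : ℕ) (F : Set (Finset (Fin d))) : Prop :=
  ∃ n₀ : ℕ, ∀ n, n₀ ≤ n → ∀ c : Finset (Fin n) → Fin t, IsLayered c →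
    ∃ i : Fin t, ContainsCopy F {A | c A = i}

/-! ### Auxiliary material: finite hypergraph Ramsey theorem -/

open Finset

/-- Splitting off the `r` largest elements of a finite set. -/
lemma exists_top_split {α : Type*} [LinearOrder α] (r : ℕ) :
    ∀ X : Finset α, r ≤ X.card →
      ∃ B, B ⊆ X ∧ B.card = r ∧ ∀ x ∈ X, x ∉ B → ∀ y ∈ B, x < y := by
  induction r with
  | zero => intro X _; exact ⟨∅, empty_subset _, card_empty, by simp⟩
  | succ r ih =>
    intro X hX
    have hne : X.Nonempty := card_pos.mp (by omega)
    set y := X.max' hne with hy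
    have hyX : y ∈ X := X.max'_mem hne
    have hcard : r ≤ (X.erase y).card := by
      rw [card_erase_of_mem hyX]; omega
    obtain ⟨B', hB'sub, hB'card, hB'top⟩ := ih (X.erase y) hcard
    have hyB' : y ∉ B' := fun h => (mem_erase.mp (hB'sub h)).1 rfl
    refine ⟨insert y B', ?_, ?_, ?_⟩
    · exact insert_subset hyX (hB'sub.trans (erase_subset _ _))
    · rw [card_insert_of_notMem hyB', hB'card]
    · intro x hxX hxB b hb
      rcases mem_insert.mp hb with rfl | hbB'
      · exact lt_of_le_of_ne (X.le_max' x hxX) (fun h => hxB (by rw [h]; exact mem_insert_self _ _))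
      · have hxy : x ≠ y := fun h => hxB (h ▸ mem_insert_self _ _)
        exact hB'top x (mem_erase.mpr ⟨hxy, hxX⟩) (fun h => hxB (mem_insert_of_mem h)) b hbB'

/-- The finite hypergraph Ramsey theorem: colouring `r`-element subsets of a big enough
linearly ordered set with colours from a finite set `κ`, we find a subset of size `m`
all of whose `r`-element subsets receive the same colour. -/
lemma hyper_ramsey (κ : Type) [DecidableEq κ] [Fintype κ] (r : ℕ) :
    ∀ m : ℕ, ∃ N : ℕ, ∀ (α : Type) [LinearOrder α] (V : Finset α) (χ : Finset α → κ),
      N ≤ V.card → ∃ Y : Finset α, Y ⊆ V ∧ m ≤ Y.card ∧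
        ∀ T ⊆ Y, T.card = r → ∀ T' ⊆ Y, T'.card = r → χ T = χ T' := by
  induction r with
  | zero =>
    intro m
    refine ⟨m, fun α _ V χ hV => ⟨V, subset_rfl, hV, ?_⟩⟩
    intro T _ hT T' _ hT'
    rw [card_eq_zero.mp hT, card_eq_zero.mp hT']
  | succ r ih =>
    intro m
    choose RN hRN using ih
    -- `h j` : size sufficient to extract a "min-determined" chain of length `j`
    let h : ℕ → ℕ := fun j => Nat.rec 0 (fun _ acc => RN acc + 1) j
    have hsucc : ∀ j, h (j + 1) = RN (h j) + 1 := fun j => rfl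
    -- chain extraction: a set of size `s` on which the colour of an `(r+1)`-set
    -- depends only on its minimum
    have chain : ∀ (s : ℕ) (α : Type) [LinearOrder α] (X : Finset α) (χ : Finset α → κ),
        h s ≤ X.card → ∃ xs : Finset α, xs ⊆ X ∧ xs.card = s ∧
          ∀ z (T T' : Finset α), T ⊆ xs → T' ⊆ xs → T.card = r + 1 → T'.card = r + 1 →
            z ∈ T → z ∈ T' → (∀ y ∈ T, z ≤ y) → (∀ y ∈ T', z ≤ y) → χ T = χ T' := by
      intro s
      induction s with
      | zero =>
        intro α _ X χ _
        refine ⟨∅, empty_subset _, card_empty, ?_⟩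
        intro z T T' hT _ hTc _ _ _ _ _
        have : T = ∅ := subset_empty.mp hT
        rw [this] at hTc; simp at hTc
      | succ s ihs =>
        intro α _ X χ hX
        rw [hsucc] at hX
        have hne : X.Nonempty := card_pos.mp (by omega)
        set x := X.min' hne with hxdef
        have hxX : x ∈ X := X.min'_mem hne
        have hX' : RN (h s) ≤ (X.erase x).card := by
          rw [card_erase_of_mem hxX]; omega
        obtain ⟨Y, hYsub, hYcard, hYmono⟩ := hRN (h s) α (X.erase x)
          (fun T => χ (insert x T)) hX'
        obtain ⟨xs', hxs'Y, hxs'card, hxs'P⟩ := ihs α Y χ hYcard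
        have hxs'X' : xs' ⊆ X.erase x := hxs'Y.trans hYsub
        have hxxs' : x ∉ xs' := fun hmem => (mem_erase.mp (hxs'X' hmem)).1 rfl
        have hsubX : insert x xs' ⊆ X :=
          insert_subset hxX (hxs'X'.trans (erase_subset _ _))
        refine ⟨insert x xs', hsubX, ?_, ?_⟩
        · rw [card_insert_of_notMem hxxs', hxs'card]
        · intro z T T' hT hT' hTc hT'c hzT hzT' hzleT hzleT'
          by_cases hzx : z = x
          · subst hzx
            have hTe : T.erase x ⊆ xs' := by
              intro a ha
              rcases mem_insert.mp (hT (erase_subset _ _ ha)) with h1 | h1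
              · exact absurd h1 (mem_erase.mp ha).1
              · exact h1
            have hT'e : T'.erase x ⊆ xs' := by
              intro a ha
              rcases mem_insert.mp (hT' (erase_subset _ _ ha)) with h1 | h1
              · exact absurd h1 (mem_erase.mp ha).1
              · exact h1
            have hc1 : (T.erase x).card = r := by rw [card_erase_of_mem hzT]; omega
            have hc2 : (T'.erase x).card = r := by rw [card_erase_of_mem hzT']; omega
            have := hYmono (T.erase x) (hTe.trans hxs'Y) hc1 (T'.erase x)
              (hT'e.trans hxs'Y) hc2
            rwa [insert_erase hzT, insert_erase hzT'] at this
          · have hzX : z ∈ X := hsubX (hT hzT)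
            have hxz : x ≤ z := X.min'_le z hzX
            have hxT : x ∉ T := fun hx => hzx (le_antisymm (hzleT x hx) hxz)
            have hxT' : x ∉ T' := fun hx => hzx (le_antisymm (hzleT' x hx) hxz)
            have hTxs' : T ⊆ xs' := by
              intro a ha
              rcases mem_insert.mp (hT ha) with rfl | h1
              · exact absurd ha hxT
              · exact h1
            have hT'xs' : T' ⊆ xs' := by
              intro a ha
              rcases mem_insert.mp (hT' ha) with rfl | h1
              · exact absurd ha hxT'
              · exact h1
            exact hxs'P z T T' hTxs' hT'xs' hTc hT'c hzT hzT' hzleT hzleT'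
    -- main argument
    refine ⟨h (Fintype.card κ * m + 1 + r), ?_⟩
    intro α _ V χ hV
    obtain ⟨xs, hxsV, hxscard, hP⟩ := chain (Fintype.card κ * m + 1 + r) α V χ hV
    obtain ⟨B, hBxs, hBcard, hBtop⟩ := exists_top_split r xs (by rw [hxscard]; exact Nat.le_add_left _ _)
    set L := xs \ B with hLdef
    have hLcard : L.card = Fintype.card κ * m + 1 := by
      rw [hLdef, card_sdiff_of_subset hBxs, hxscard, hBcard]; omega
    set dcol : α → κ := fun x => χ (insert x B) with hdcol
    obtain ⟨k, -, hk⟩ := exists_lt_card_fiber_of_mul_lt_card_of_maps_to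
      (f := dcol) (t := Finset.univ) (n := m) (fun a _ => mem_univ _)
      (by rw [card_univ, hLcard]; omega)
    set Y := L.filter fun x => dcol x = k with hYdef
    have hYL : Y ⊆ L := filter_subset _ _
    have hYxs : Y ⊆ xs := hYL.trans (sdiff_subset)
    have key : ∀ T₀ ⊆ Y, T₀.card = r + 1 → χ T₀ = k := by
      intro T₀ hsub hcard
      have hne : T₀.Nonempty := card_pos.mp (by omega)
      set z := T₀.min' hne with hzdef
      have hzT₀ : z ∈ T₀ := T₀.min'_mem hne
      have hzY : z ∈ Y := hsub hzT₀
      have hzL : z ∈ L := hYL hzY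
      have hzxs : z ∈ xs := sdiff_subset hzL
      have hzB : z ∉ B := (mem_sdiff.mp hzL).2
      have hinsc : (insert z B).card = r + 1 := by
        rw [card_insert_of_notMem hzB, hBcard]
      have hinss : insert z B ⊆ xs := insert_subset hzxs hBxs
      have hle2 : ∀ y ∈ insert z B, z ≤ y := by
        intro y hy
        rcases mem_insert.mp hy with rfl | hyB
        · exact le_refl _
        · exact le_of_lt (hBtop z hzxs hzB y hyB)
      have := hP z T₀ (insert z B) (hsub.trans hYxs) hinss hcard hinsc hzT₀
        (mem_insert_self _ _) (fun y hy => T₀.min'_le y hy) hle2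
      rw [this]
      exact (mem_filter.mp hzY).2
    refine ⟨Y, (hYxs.trans hxsV), le_of_lt hk, ?_⟩
    intro T hT hTc T' hT' hT'c
    rw [key T hT hTc, key T' hT' hT'c]

/-! ### The layered-subcube extraction -/

/-- Number of elements of `A` below `m`. -/
def cnt (n : ℕ) (A : Finset (Fin n)) (m : Fin n) : ℕ := (A.filter fun a => a < m).card

lemma cnt_le (n : ℕ) (A : Finset (Fin n)) (m : Fin n) : cnt n A m ≤ m.val := by
  have h1 : ((A.filter fun a => a < m).image Fin.val) ⊆ Finset.range m.val := by
    intro x hx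
    obtain ⟨a, ha, rfl⟩ := mem_image.mp hx
    exact mem_range.mpr (mem_filter.mp ha).2
  calc cnt n A m = ((A.filter fun a => a < m).image Fin.val).card :=
        (card_image_of_injective _ Fin.val_injective).symm
    _ ≤ (Finset.range m.val).card := card_le_card h1
    _ = m.val := card_range _

lemma cnt_mono (n : ℕ) (A : Finset (Fin n)) {m m' : Fin n} (h : m ≤ m') :
    cnt n A m ≤ cnt n A m' :=
  card_le_card (filter_subset_filter _ (fun a ha => ha) |>.trans
    (by intro a ha; exact mem_filter.mpr ⟨(mem_filter.mp ha).1, lt_of_lt_of_le (mem_filter.mp ha).2 h⟩))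

lemma cnt_lt_of_mem_lt (n : ℕ) (A : Finset (Fin n)) {m m' : Fin n}
    (hm : m ∈ A) (h : m < m') : cnt n A m < cnt n A m' := by
  apply card_lt_card
  rw [Finset.ssubset_iff_of_subset]
  · exact ⟨m, mem_filter.mpr ⟨hm, h⟩, by simp⟩
  · intro a ha
    exact mem_filter.mpr ⟨(mem_filter.mp ha).1, lt_trans (mem_filter.mp ha).2 h⟩

lemma cnt_lt_card (n : ℕ) (A : Finset (Fin n)) {m : Fin n} (hm : m ∈ A) :
    cnt n A m < A.card := by
  apply card_lt_card
  rw [Finset.ssubset_iff_of_subset (filter_subset _ _)]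
  exact ⟨m, hm, by simp⟩

/-- The spread map: sends `A ⊆ [n]` to a strictly increasing map with the property that
the image of `A` depends only on `|A|`. -/
def Fval (n : ℕ) (A : Finset (Fin n)) (m : Fin n) : ℕ :=
  cnt n A m * (n + 1) + (if m ∈ A then n + 1 else m.val - cnt n A m + 1)

lemma Fval_lt (n : ℕ) (A : Finset (Fin n)) (m : Fin n) : Fval n A m < (n + 1) * (n + 1) := by
  have h1 : cnt n A m ≤ m.val := cnt_le n A m
  have h2 : m.val < n := m.isLt
  have hc : cnt n A m + 1 ≤ n := by omega
  have h4 : (cnt n A m + 1) * (n + 1) ≤ n * (n + 1) := Nat.mul_le_mul_right _ hc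
  have h5 : n * (n + 1) < (n + 1) * (n + 1) := by
    have : n < n + 1 := Nat.lt_succ_self n
    exact Nat.mul_lt_mul_of_lt_of_le this (le_refl _) (by omega)
  have h6 : (cnt n A m + 1) * (n + 1) = cnt n A m * (n + 1) + (n + 1) := by ring
  unfold Fval
  split
  · omega
  · have : m.val - cnt n A m + 1 ≤ n + 1 := by omega
    omega

lemma Fval_strictMono (n : ℕ) (A : Finset (Fin n)) : StrictMono (Fval n A) := by
  intro m m' hmm'
  have hjj' : cnt n A m ≤ cnt n A m' := cnt_mono n A (le_of_lt hmm')
  have hjm : cnt n A m ≤ m.val := cnt_le n A m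
  have hj'm : cnt n A m' ≤ m'.val := cnt_le n A m'
  have hm : m.val < n := m.isLt
  have hm' : m'.val < n := m'.isLt
  have hmv : m.val < m'.val := hmm'
  have PE : ∀ a b : ℕ, a < b → a * (n + 1) + (n + 1) ≤ b * (n + 1) := by
    intro a b hab
    have h1 : (a + 1) * (n + 1) ≤ b * (n + 1) := Nat.mul_le_mul_right _ hab
    have h2 : (a + 1) * (n + 1) = a * (n + 1) + (n + 1) := by ring
    omega
  have PM : ∀ a b : ℕ, a ≤ b → a * (n + 1) ≤ b * (n + 1) := fun a b hab =>
    Nat.mul_le_mul_right _ hab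
  unfold Fval
  split
  · -- m ∈ A
    rename_i hmA
    have hlt : cnt n A m < cnt n A m' := cnt_lt_of_mem_lt n A hmA hmm'
    have := PE _ _ hlt
    split
    · omega
    · omega
  · -- m ∉ A
    have hPM := PM _ _ hjj'
    split
    · -- m' ∈ A
      have : m.val - cnt n A m + 1 ≤ n := by omega
      omega
    · rcases Nat.lt_or_ge (cnt n A m) (cnt n A m') with hlt | hge
      · have := PE _ _ hlt
        have : m.val - cnt n A m + 1 ≤ n := by omega
        omega
      · have heq : cnt n A m = cnt n A m' := le_antisymm hjj' (by omega)
        rw [heq]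
        have : m.val - cnt n A m' < m'.val - cnt n A m' := by omega
        omega

lemma image_Fval (n : ℕ) (A : Finset (Fin n)) :
    A.image (Fval n A) = (Finset.range A.card).image (fun j => j * (n + 1) + (n + 1)) := by
  have hinj : Function.Injective (fun j => j * (n + 1) + (n + 1)) := by
    intro a b hab
    simp only at hab
    have h1 : a * (n + 1) = b * (n + 1) := by omega
    exact Nat.eq_of_mul_eq_mul_right (by omega) h1
  apply Finset.eq_of_subset_of_card_le
  · intro x hx
    obtain ⟨a, haA, rfl⟩ := mem_image.mp hx
    have hv : Fval n A a = cnt n A a * (n + 1) + (n + 1) := by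
      unfold Fval; rw [if_pos haA]
    exact mem_image.mpr ⟨cnt n A a, mem_range.mpr (cnt_lt_card n A haA), hv.symm⟩
  · rw [card_image_of_injective _ hinj, card_range,
      card_image_of_injective _ (Fval_strictMono n A).injective]

/-- `Fval` as a map into `Fin ((n+1)*(n+1))`. -/
def FF (n : ℕ) (A : Finset (Fin n)) (m : Fin n) : Fin ((n + 1) * (n + 1)) :=
  ⟨Fval n A m, Fval_lt n A m⟩

lemma FF_strictMono (n : ℕ) (A : Finset (Fin n)) : StrictMono (FF n A) :=
  fun _ _ hab => Fin.mk_lt_mk.mpr (Fval_strictMono n A hab)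

lemma image_FF_eq (n : ℕ) (A B : Finset (Fin n)) (h : A.card = B.card) :
    A.image (FF n A) = B.image (FF n B) := by
  apply Finset.image_injective Fin.val_injective
  have hv : ∀ C : Finset (Fin n), (C.image (FF n C)).image Fin.val = C.image (Fval n C) := by
    intro C
    rw [Finset.image_image]
    rfl
  rw [hv, hv, image_Fval, image_Fval, h]

/-- The key extraction lemma: in a sufficiently high-dimensional cube, every colouring
admits an embedded subcube on which it is layered. -/
lemma exists_layered_embedding (n t : ℕ) :
    ∃ N : ℕ, ∀ χ : Finset (Fin N) → Fin t,
      ∃ e : Fin n → Fin N, Function.Injective e ∧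
        ∀ A B : Finset (Fin n), A.card = B.card → χ (A.image e) = χ (B.image e) := by
  classical
  obtain ⟨N, hN⟩ := hyper_ramsey (Finset (Fin n) → Fin t) n ((n + 1) * (n + 1))
  refine ⟨N, ?_⟩
  intro χ
  set χhat : Finset (Fin N) → (Finset (Fin n) → Fin t) := fun T =>
    if h : T.card = n then (fun A => χ (A.image (T.orderEmbOfFin h))) else (fun _ => χ ∅)
    with hχhat
  obtain ⟨Y, -, hYcard, hYmono⟩ := hN (Fin N) Finset.univ χhat (by simp)
  obtain ⟨Y', hY'Y, hY'card⟩ := Finset.exists_subset_card_eq hYcard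
  set y : Fin ((n + 1) * (n + 1)) ↪o Fin N := Y'.orderEmbOfFin hY'card with hy
  -- the generic subcube maps
  have gmono : ∀ A : Finset (Fin n), StrictMono (fun m => y (FF n A m)) :=
    fun A => y.strictMono.comp (FF_strictMono n A)
  have gsub : ∀ A : Finset (Fin n), (Finset.univ.image (fun m => y (FF n A m))) ⊆ Y' := by
    intro A x hx
    obtain ⟨a, -, rfl⟩ := mem_image.mp hx
    exact Finset.orderEmbOfFin_mem _ _ _
  have gcard : ∀ A : Finset (Fin n),
      (Finset.univ.image (fun m => y (FF n A m))).card = n := by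
    intro A
    rw [card_image_of_injective _ (gmono A).injective, card_univ, Fintype.card_fin]
  -- evaluation of the pattern of such a subcube
  have geval : ∀ (A A₀ : Finset (Fin n)),
      χhat (Finset.univ.image (fun m => y (FF n A m))) A₀
        = χ (A₀.image (fun m => y (FF n A m))) := by
    intro A A₀
    have hcard := gcard A
    have huniq : (OrderEmbedding.ofStrictMono _ (gmono A))
        = (Finset.univ.image (fun m => y (FF n A m))).orderEmbOfFin hcard := by
      apply Finset.orderEmbOfFin_unique' hcard
      intro x
      exact mem_image_of_mem _ (mem_univ x)
    rw [hχhat]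
    simp only [dif_pos hcard]
    rw [← huniq]
    rfl
  set e : Fin n → Fin N := fun m => y (FF n (∅ : Finset (Fin n)) m) with he
  refine ⟨e, (gmono ∅).injective, ?_⟩
  intro A B hAB
  have ramAB : ∀ A' : Finset (Fin n),
      χhat (Finset.univ.image e) = χhat (Finset.univ.image (fun m => y (FF n A' m))) := by
    intro A'
    exact hYmono _ ((gsub ∅).trans hY'Y) (gcard ∅) _ ((gsub A').trans hY'Y) (gcard A')
  have step : ∀ A' : Finset (Fin n), χ (A'.image e) = χ ((A'.image (FF n A')).image y) := by
    intro A'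
    calc χ (A'.image e) = χhat (Finset.univ.image e) A' := (geval ∅ A').symm
      _ = χhat (Finset.univ.image (fun m => y (FF n A' m))) A' := by rw [ramAB A']
      _ = χ (A'.image (fun m => y (FF n A' m))) := geval A' A'
      _ = χ ((A'.image (FF n A')).image y) := by rw [Finset.image_image]; rfl
  rw [step A, step B, image_FF_eq n A B hAB]

/-! ### Cube embedding helpers -/

lemma isCubeEmbedding_image {a b : ℕ} {g : Fin a → Fin b} (hg : Function.Injective g) :
    IsCubeEmbedding (fun A => A.image g) := by
  constructor
  · exact Finset.image_injective hg
  · intro A B h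
    rw [← Finset.image_symmDiff _ _ hg, card_image_of_injective _ hg]
    exact h

lemma isCubeEmbedding_comp {a b c : ℕ} {ψ : Finset (Fin a) → Finset (Fin b)}
    {φ : Finset (Fin b) → Finset (Fin c)} (hψ : IsCubeEmbedding ψ) (hφ : IsCubeEmbedding φ) :
    IsCubeEmbedding (φ ∘ ψ) :=
  ⟨hφ.1.comp hψ.1, fun A B h => hφ.2 _ _ (hψ.2 A B h)⟩

/-- Theorem 2 (layer:thm): a set `S ⊆ V_d` is `t`-Ramsey iff it is `t`-layer-Ramsey. -/
theorem ramsey_iff_layerRamsey (t d : ℕ) (S : Set (Finset (Fin d))) :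
    IsRamsey t d S ↔ IsLayerRamsey t d S := by
  constructor
  · rintro ⟨n₀, hn⟩
    exact ⟨n₀, fun n h c _ => hn n h c⟩
  · rintro ⟨nL, hL⟩
    obtain ⟨N₁, hN₁⟩ := exists_layered_embedding nL t
    refine ⟨N₁, fun N hNN c => ?_⟩
    set c' : Finset (Fin N₁) → Fin t := fun A => c (A.image (Fin.castLE hNN)) with hc'
    obtain ⟨e, he, hlay⟩ := hN₁ c'
    obtain ⟨i, ψ, hψ, hmono⟩ := hL nL le_rfl (fun A => c' (A.image e))
      (fun A B h => hlay A B h)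
    have hcast : Function.Injective (Fin.castLE hNN) := Fin.castLE_injective hNN
    refine ⟨i, (fun X => X.image (Fin.castLE hNN)) ∘ (fun X => X.image e) ∘ ψ, ?_, ?_⟩
    · exact isCubeEmbedding_comp (isCubeEmbedding_comp hψ (isCubeEmbedding_image he))
        (isCubeEmbedding_image hcast)
    · intro A hA
      exact hmono A hA
end

section
/- For all s, t ≥ 1 there exists an integer c_L(s,t) such that every t-coloring of Q_n with n ≥ c_L(s,t) contains a copy of Q_s (i.e. an s-dimensional subcube) such that the restriction of the coloring to this subcube is layered (constant on each layer of the subcube). -/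
/-!
Let `ψ` send `A ⊆ [s]` to `{y_a : a ∈ A}` for distinct points `y_1 < ⋯ < y_s` of `[n]`; this is
a cube embedding, and the colouring is layered on its image exactly when `c` is constant on
the `r`-subsets of `Y = {y_1, …, y_s}` for every `r ≤ s`. Such a `Y` exists by applying the
finite hypergraph Ramsey theorem once for each uniformity `r ≤ s`. Ramsey's theorem is proved
by the Erdős–Rado argument: repeatedly taking the least remaining point `a` and using
`r`-uniform Ramsey for `A ↦ c (insert a A)` yields a large set on which the colour of an
`(r+1)`-set depends only on its least element, and pigeonhole on that element finishes.
-/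

open Finset

section Ramsey

variable {α κ : Type*}

def IsHomogeneousOn (χ : Finset α → κ) (r : ℕ) (T : Finset α) : Prop :=
  ∀ ⦃A⦄, A ⊆ T → ∀ ⦃B⦄, B ⊆ T → #A = r → #B = r → χ A = χ B

theorem IsHomogeneousOn.mono {χ : Finset α → κ} {r : ℕ} {T T' : Finset α}
    (h : IsHomogeneousOn χ r T') (hT : T ⊆ T') : IsHomogeneousOn χ r T :=
  fun _ hA _ hB => h (hA.trans hT) (hB.trans hT)

theorem isHomogeneousOn_zero (χ : Finset α → κ) (T : Finset α) : IsHomogeneousOn χ 0 T := by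
  intro A _ B _ hA hB
  rw [card_eq_zero.mp hA, card_eq_zero.mp hB]

variable [LinearOrder α]

/-- The colour of an `(r+1)`-subset of `B` depends only on its least element. -/
def IsEndHomogeneous (χ : Finset α → κ) (r : ℕ) (B : Finset α) : Prop :=
  ∀ a ∈ B, IsHomogeneousOn (fun A => χ (insert a A)) r {b ∈ B | a < b}

theorem isEndHomogeneous_empty (χ : Finset α → κ) (r : ℕ) : IsEndHomogeneous χ r ∅ := by
  simp [IsEndHomogeneous]

theorem IsEndHomogeneous.insert_of_forall_lt {χ : Finset α → κ} {r : ℕ} {B : Finset α} {a : α}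
    (hB : IsEndHomogeneous χ r B) (haB : ∀ b ∈ B, a < b)
    (ha : IsHomogeneousOn (fun A => χ (insert a A)) r B) :
    IsEndHomogeneous χ r (insert a B) := by
  intro b hb
  rcases mem_insert.mp hb with rfl | hb
  · rwa [filter_insert, if_neg (lt_irrefl b), filter_true_of_mem haB]
  · rw [filter_insert, if_neg (haB b hb).asymm]
    exact hB b hb

theorem IsEndHomogeneous.apply_eq_apply_insert {χ : Finset α → κ} {r : ℕ} {B A A₀ : Finset α}
    {a : α} (hB : IsEndHomogeneous χ r B) (hAB : A ⊆ B) (haA : a ∈ A) (ha : ∀ x ∈ A, a ≤ x)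
    (hA : #A = r + 1) (hA₀ : A₀ ⊆ {b ∈ B | a < b}) (hA₀r : #A₀ = r) :
    χ A = χ (insert a A₀) := by
  have herase : A.erase a ⊆ {b ∈ B | a < b} := fun x hx =>
    mem_filter.mpr ⟨hAB (mem_of_mem_erase hx),
      (ha x (mem_of_mem_erase hx)).lt_of_ne (ne_of_mem_erase hx).symm⟩
  have h : χ (insert a (A.erase a)) = χ (insert a A₀) :=
    hB a (hAB haA) herase hA₀ (by rw [card_erase_of_mem haA, hA]; rfl) hA₀r
  rwa [insert_erase haA] at h

/-- `ramseyEndBound R m` guarantees an end-homogeneous set of size `m` when `R N` points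
guarantee an `r`-homogeneous set of size `N`. -/
def ramseyEndBound (R : ℕ → ℕ) : ℕ → ℕ
  | 0 => 0
  | m + 1 => R (ramseyEndBound R m) + 1

theorem exists_isEndHomogeneous {R : ℕ → ℕ} {r : ℕ}
    (hR : ∀ N (S : Finset α) (χ : Finset α → κ), R N ≤ #S →
      ∃ T ⊆ S, N ≤ #T ∧ IsHomogeneousOn χ r T)
    (m : ℕ) (S : Finset α) (χ : Finset α → κ) (hS : ramseyEndBound R m ≤ #S) :
    ∃ B ⊆ S, m ≤ #B ∧ IsEndHomogeneous χ r B := by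
  induction m generalizing S with
  | zero => exact ⟨∅, empty_subset S, le_rfl, isEndHomogeneous_empty χ r⟩
  | succ m ih =>
    have hSne : S.Nonempty := card_pos.mp (by simp only [ramseyEndBound] at hS; omega)
    set a := S.min' hSne
    have haS : a ∈ S := S.min'_mem hSne
    obtain ⟨T, hTS, hTcard, hT⟩ := hR (ramseyEndBound R m) (S.erase a) (fun A => χ (insert a A))
      (by simp only [ramseyEndBound] at hS; rw [card_erase_of_mem haS]; omega)
    obtain ⟨B, hBT, hBcard, hB⟩ := ih T hTcard
    have haB : ∀ b ∈ B, a < b := fun b hb =>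
      S.min'_lt_of_mem_erase_min' hSne (hTS (hBT hb))
    refine ⟨insert a B, insert_subset haS ((hBT.trans hTS).trans (erase_subset a S)), ?_,
      hB.insert_of_forall_lt haB (hT.mono hBT)⟩
    rw [card_insert_of_notMem fun h => (haB a h).false]
    omega

theorem card_sub_le_card_filter_le_card_filter_lt (B : Finset α) (r : ℕ) :
    #B - r ≤ #{a ∈ B | r ≤ #{b ∈ B | a < b}} := by
  have hsplit := card_filter_add_card_filter_not (s := B) (fun a => r ≤ #{b ∈ B | a < b})
  set E := {a ∈ B | ¬ r ≤ #{b ∈ B | a < b}}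
  suffices #E ≤ r by omega
  rcases E.eq_empty_or_nonempty with hE | hE
  · simp [hE]
  have hmin := (mem_filter.mp (E.min'_mem hE)).2
  have hsub : E.erase (E.min' hE) ⊆ {b ∈ B | E.min' hE < b} := fun x hx =>
    mem_filter.mpr ⟨(mem_filter.mp (mem_of_mem_erase hx)).1,
      E.min'_lt_of_mem_erase_min' hE hx⟩
  have := card_le_card hsub
  rw [card_erase_of_mem (E.min'_mem hE)] at this
  omega

theorem IsEndHomogeneous.exists_isHomogeneousOn_succ [Fintype κ] {χ : Finset α → κ} {r N : ℕ}
    {B : Finset α} (hB : IsEndHomogeneous χ r B) (hN : Fintype.card κ * N + r ≤ #B) :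
    ∃ T ⊆ B, N ≤ #T ∧ IsHomogeneousOn χ (r + 1) T := by
  classical
  have hC_card := card_sub_le_card_filter_le_card_filter_lt B r
  set C := {a ∈ B | r ≤ #{b ∈ B | a < b}}
  have hC : ∀ a ∈ C, ∃ A ⊆ {b ∈ B | a < b}, #A = r := fun a ha =>
    exists_subset_card_eq (mem_filter.mp ha).2
  choose! top htop_sub htop_card using hC
  obtain ⟨i, -, hi⟩ := exists_le_card_fiber_of_mul_le_card_of_maps_to (s := C) (n := N)
    (f := fun a => χ (insert a (top a))) (fun a _ => mem_univ _) ⟨χ ∅, mem_univ _⟩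
    (by rw [card_univ]; omega)
  refine ⟨_, (filter_subset _ C).trans (filter_subset _ B), hi, ?_⟩
  have hcolour : ∀ A ⊆ {a ∈ C | χ (insert a (top a)) = i}, #A = r + 1 → χ A = i := by
    intro A hA hAcard
    have hAne : A.Nonempty := card_pos.mp (by omega)
    have haC := mem_filter.mp (hA (A.min'_mem hAne))
    rw [hB.apply_eq_apply_insert (hA.trans ((filter_subset _ C).trans (filter_subset _ B)))
      (A.min'_mem hAne) (fun x hx => A.min'_le x hx) hAcard (htop_sub _ haC.1)
      (htop_card _ haC.1), haC.2]
  exact fun A hA A' hA' hAr hA'r => (hcolour A hA hAr).trans (hcolour A' hA' hA'r).symm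

variable [Fintype κ]

/-- A bound for the `t`-colour, `r`-uniform hypergraph Ramsey number for sets of size `N`. -/
def ramseyBound (t : ℕ) : ℕ → ℕ → ℕ
  | 0, N => N
  | r + 1, N => ramseyEndBound (ramseyBound t r) (t * N + r)

theorem exists_isHomogeneousOn (r N : ℕ) (S : Finset α) (χ : Finset α → κ)
    (hS : ramseyBound (Fintype.card κ) r N ≤ #S) :
    ∃ T ⊆ S, N ≤ #T ∧ IsHomogeneousOn χ r T := by
  induction r generalizing N S χ with
  | zero => exact ⟨S, Subset.rfl, hS, isHomogeneousOn_zero χ S⟩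
  | succ r ih =>
    obtain ⟨B, hBS, hBcard, hB⟩ := exists_isEndHomogeneous ih _ S χ hS
    obtain ⟨T, hTB, hTcard, hT⟩ := hB.exists_isHomogeneousOn_succ hBcard
    exact ⟨T, hTB.trans hBS, hTcard, hT⟩

def layeredBound (t : ℕ) : ℕ → ℕ → ℕ
  | 0, N => N
  | k + 1, N => ramseyBound t (k + 1) (layeredBound t k N)

theorem exists_forall_le_isHomogeneousOn (k N : ℕ) (S : Finset α) (χ : Finset α → κ)
    (hS : layeredBound (Fintype.card κ) k N ≤ #S) :
    ∃ T ⊆ S, N ≤ #T ∧ ∀ r ≤ k, IsHomogeneousOn χ r T := by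
  induction k generalizing N S with
  | zero =>
    refine ⟨S, Subset.rfl, hS, fun r hr => ?_⟩
    rw [Nat.le_zero.mp hr]
    exact isHomogeneousOn_zero χ S
  | succ k ih =>
    obtain ⟨T₁, hT₁S, hT₁card, hT₁⟩ := exists_isHomogeneousOn (k + 1) _ S χ hS
    obtain ⟨T, hTT₁, hTcard, hT⟩ := ih N T₁ hT₁card
    refine ⟨T, hTT₁.trans hT₁S, hTcard, fun r hr => ?_⟩
    rcases hr.lt_or_eq with hr | rfl
    · exact hT r (Nat.lt_succ_iff.mp hr)
    · exact hT₁.mono hTT₁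

end Ramsey

theorem isCubeEmbedding_image_s1 {d n : ℕ} {f : Fin d → Fin n} (hf : f.Injective) :
    IsCubeEmbedding (image f) :=
  ⟨image_injective hf, fun A B hAB => by
    rwa [← image_symmDiff A B hf, card_image_of_injective _ hf]⟩

theorem exists_layered_subcube_general (s t : ℕ) :
    ∃ cL : ℕ, ∀ n, cL ≤ n → ∀ c : Finset (Fin n) → Fin t,
      ∃ ψ : Finset (Fin s) → Finset (Fin n), IsCubeEmbedding ψ ∧
        ∀ A B : Finset (Fin s), A.card = B.card → c (ψ A) = c (ψ B) := by
  refine ⟨layeredBound t s s, fun n hn c => ?_⟩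
  obtain ⟨T, -, hTcard, hT⟩ :=
    exists_forall_le_isHomogeneousOn s s univ c (by simpa using hn)
  obtain ⟨Y, hYT, hYcard⟩ := exists_subset_card_eq hTcard
  set f := Y.orderEmbOfFin hYcard
  have himage : ∀ A : Finset (Fin s), A.image f ⊆ T := fun A =>
    (image_subset_iff.mpr fun i _ => Y.orderEmbOfFin_mem hYcard i).trans hYT
  refine ⟨image f, isCubeEmbedding_image_s1 f.injective, fun A B hAB => ?_⟩
  exact hT #A (card_le_univ A |>.trans_eq (Fintype.card_fin s)) (himage A) (himage B)
    (card_image_of_injective A f.injective) (by rw [card_image_of_injective B f.injective, hAB])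

/-- Lemma 3 (layer:lem): for all `s, t ≥ 1` there exists `c_L(s,t)` such that every
`t`-coloring of `Q_n`, `n ≥ c_L(s,t)`, contains a copy of `Q_s` (an `s`-dimensional
subcube, given by an embedding of `Q_s`) on which the coloring is layered, i.e. constant
on each layer of the subcube. -/
theorem exists_layered_subcube (s t : ℕ) (hs : 1 ≤ s) (ht : 1 ≤ t) :
    ∃ cL : ℕ, ∀ n, cL ≤ n → ∀ c : Finset (Fin n) → Fin t,
      ∃ ψ : Finset (Fin s) → Finset (Fin n), IsCubeEmbedding ψ ∧
        ∀ A B : Finset (Fin s), A.card = B.card → c (ψ A) = c (ψ B) :=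
  exists_layered_subcube_general s t
end

section
/- Let t ≥ 2 and let S be a vertex disjoint union of cliques that is not t-Ramsey. Then any union of cliques (not necessarily vertex disjoint) with the same weights and orders as the cliques of S is also not t-Ramsey. -/
open Finset Function
open scoped symmDiff

namespace Finset

variable {α β : Type*} [DecidableEq α] [DecidableEq β]

theorem card_symmDiff_add_two_mul_card_inter (s t : Finset α) :
    #(s ∆ t) + 2 * #(s ∩ t) = #s + #t := by
  rw [Finset.symmDiff_def, card_union_of_disjoint disjoint_sdiff_sdiff]
  have := card_sdiff_add_card_inter s t
  have := card_sdiff_add_card_inter t s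
  rw [inter_comm t s] at this
  omega

theorem symmDiff_singleton_of_mem {s : Finset α} {x : α} (hx : x ∈ s) :
    s ∆ {x} = s.erase x := by
  ext; simp only [mem_symmDiff, mem_erase, mem_singleton]; grind

/-- Two vertices of the cube at distance two have exactly two common neighbours. -/
theorem eq_symmDiff_singleton_or_of_card_symmDiff_eq_one {u v w : Finset α} {p q : α}
    (hvw : v ∆ w = {p, q}) (hv : #(u ∆ v) = 1) (hw : #(u ∆ w) = 1) :
    u = v ∆ {p} ∨ u = v ∆ {q} := by
  obtain ⟨x, hx⟩ := card_eq_one.1 hv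
  obtain ⟨y, hy⟩ := card_eq_one.1 hw
  have hxy : ({x} : Finset α) ∆ {y} = {p, q} := by
    rw [← hx, ← hy, ← hvw, symmDiff_symmDiff_symmDiff_comm, symmDiff_self, bot_symmDiff]
  have hx' : x ∈ ({p, q} : Finset α) := by
    rw [← hxy, mem_symmDiff, mem_singleton, mem_singleton]
    refine Or.inl ⟨rfl, fun hxy' => ?_⟩
    subst hxy'
    rw [symmDiff_self, bot_eq_empty] at hxy
    exact insert_ne_empty p {q} hxy.symm
  have hu : u = v ∆ {x} := by rw [← hx, symmDiff_comm u v, symmDiff_symmDiff_cancel_left]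
  rcases mem_insert.1 hx' with rfl | hxq
  · exact Or.inl hu
  · exact Or.inr (mem_singleton.1 hxq ▸ hu)

theorem exists_card_inter_eq {ι : Type*} [Fintype ι] {K : ι → Finset α}
    (hK : Pairwise (Disjoint on K)) {w : ι → ℕ} (hw : ∀ i, w i ≤ #(K i)) :
    ∃ W : Finset α, ∀ i, #(W ∩ K i) = w i := by
  choose W hWK hW using fun i => exists_subset_card_eq (hw i)
  refine ⟨univ.biUnion W, fun i => ?_⟩
  suffices univ.biUnion W ∩ K i = W i by rw [this, hW]
  ext z
  simp only [mem_inter, mem_biUnion, mem_univ, true_and]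
  refine ⟨fun ⟨⟨j, hz⟩, hzi⟩ => ?_, fun hz => ⟨⟨i, hz⟩, hWK i hz⟩⟩
  obtain rfl | hji := eq_or_ne j i
  · exact hz
  · exact absurd (hK hji) (not_disjoint_iff.2 ⟨z, hWK j hz, hzi⟩)

theorem exists_subset_card_eq_card_inter_eq {K W B : Finset α} {K' V : Finset β}
    (hB : B ⊆ K) (hW : W ⊆ K) (hV : V ⊆ K') (hK : #K = #K') (hWV : #W = #V) :
    ∃ A ⊆ K', #A = #B ∧ #(A ∩ V) = #(B ∩ W) := by
  obtain ⟨A₁, hA₁V, hA₁⟩ := exists_subset_card_eq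
    ((card_le_card inter_subset_right).trans hWV.le : #(B ∩ W) ≤ #V)
  have hB_W : #(B \ W) ≤ #(K' \ V) := by
    rw [card_sdiff_of_subset hV, ← hK, ← hWV, ← card_sdiff_of_subset hW]
    exact card_le_card (sdiff_subset_sdiff hB le_rfl)
  obtain ⟨A₂, hA₂, hA₂card⟩ := exists_subset_card_eq hB_W
  have hA₂V : Disjoint A₂ V := disjoint_of_subset_left hA₂ sdiff_disjoint
  refine ⟨A₁ ∪ A₂, union_subset (hA₁V.trans hV) (hA₂.trans sdiff_subset), ?_, ?_⟩
  · rw [card_union_of_disjoint (disjoint_of_subset_left hA₁V hA₂V.symm), hA₁, hA₂card,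
      card_inter_add_card_sdiff]
  · rw [union_inter_distrib_right, inter_eq_left.2 hA₁V, disjoint_iff_inter_eq_empty.1 hA₂V,
      union_empty, hA₁]

end Finset

namespace IsCubeEmbedding

variable {d n : ℕ}

theorem symmDiff_image {f : Fin d → Fin n} (hf : Injective f) (X : Finset (Fin n)) :
    IsCubeEmbedding fun B => X ∆ B.image f := by
  refine ⟨fun A B h => image_injective hf (symmDiff_right_injective X h), fun A B h => ?_⟩
  rw [symmDiff_symmDiff_symmDiff_comm, symmDiff_self, bot_symmDiff,
    ← image_symmDiff _ _ hf, card_image_of_injective _ hf, h]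

theorem exists_eq_symmDiff_image {ψ : Finset (Fin d) → Finset (Fin n)}
    (hψ : IsCubeEmbedding ψ) :
    ∃ c : Fin d → Fin n, Injective c ∧ ∀ A, ψ A = ψ ∅ ∆ A.image c := by
  obtain ⟨hinj, hadj⟩ := hψ
  have hsingle : ∀ x, ∃ y, ψ {x} = ψ ∅ ∆ {y} := fun x => by
    obtain ⟨y, hy⟩ :=
      card_eq_one.1 (hadj ∅ {x} (by rw [← bot_eq_empty, bot_symmDiff, card_singleton]))
    exact ⟨y, by rw [← hy, symmDiff_symmDiff_cancel_left]⟩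
  choose c hc using hsingle
  have hcinj : Injective c := fun x y h =>
    singleton_injective (hinj (by rw [hc, hc, h]))
  refine ⟨c, hcinj, fun A => ?_⟩
  induction A using Finset.strongInduction with
  | H A ih =>
  obtain hA | ⟨x, hx, y, hy, hxy⟩ := (Nat.lt_or_ge #A 2).imp_right one_lt_card.1
  · obtain h | h : #A = 0 ∨ #A = 1 := by omega
    · rw [card_eq_zero.1 h, image_empty]
      exact (symmDiff_bot _).symm
    · obtain ⟨x, rfl⟩ := card_eq_one.1 h
      rw [hc, image_singleton]
  have hadj_erase {B : Finset (Fin d)} {z} (hz : z ∈ B) : #(ψ B ∆ ψ (B.erase z)) = 1 := hadj _ _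
    (by rw [← symmDiff_singleton_of_mem hz, symmDiff_symmDiff_cancel_left, card_singleton])
  have hyx : y ∈ A.erase x := mem_erase.2 ⟨Ne.symm hxy, hy⟩
  have hx_erase : ψ (A.erase x) = ψ ∅ ∆ (A.erase x).image c := ih _ (erase_ssubset hx)
  have hy_erase : ψ (A.erase y) = ψ ∅ ∆ (A.erase y).image c := ih _ (erase_ssubset hy)
  have hxy_erase : ψ ((A.erase x).erase y) = ψ ∅ ∆ ((A.erase x).erase y).image c :=
    ih _ ((erase_ssubset hyx).trans (erase_ssubset hx))
  have hdist : ψ (A.erase x) ∆ ψ (A.erase y) = {c x, c y} := by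
    rw [hx_erase, hy_erase, symmDiff_symmDiff_symmDiff_comm, symmDiff_self, bot_symmDiff,
      ← image_symmDiff _ _ hcinj, ← symmDiff_singleton_of_mem hx, ← symmDiff_singleton_of_mem hy,
      symmDiff_symmDiff_symmDiff_comm, symmDiff_self, bot_symmDiff,
      symmDiff_eq_union (disjoint_singleton.2 hxy), image_union, image_singleton, image_singleton,
      ← insert_eq]
  -- `ψ A` is a common neighbour of `ψ (A.erase x)` and `ψ (A.erase y)`; the other one is
  -- `ψ ((A.erase x).erase y)`, which injectivity rules out.
  rcases eq_symmDiff_singleton_or_of_card_symmDiff_eq_one hdist (hadj_erase hx) (hadj_erase hy)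
    with h | h
  · rw [h, hx_erase, symmDiff_assoc, ← image_singleton, ← image_symmDiff _ _ hcinj,
      ← symmDiff_singleton_of_mem hx, symmDiff_symmDiff_cancel_right]
  · rw [hx_erase, symmDiff_assoc, ← image_singleton, ← image_symmDiff _ _ hcinj,
      symmDiff_singleton_of_mem hyx, ← hxy_erase] at h
    have := congrArg (x ∈ ·) (hinj h)
    simp [hx] at this

end IsCubeEmbedding

universe u

section Ramsey

/-- The Erdős–Rado arrow `N → (m)^r_κ`, uniformly over linearly ordered ground types. -/
def RamseyArrow (κ : Type*) (N m r : ℕ) : Prop :=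
  ∀ {α : Type u} [LinearOrder α] (c : Finset α → κ) (S : Finset α), N ≤ #S →
    ∃ M ⊆ S, #M = m ∧ ∃ k, ∀ e ⊆ M, #e = r → c e = k

variable {κ : Type*}

theorem exists_subset_color_eq_tag_min {r : ℕ} (hr : ∀ m, ∃ N, RamseyArrow.{u} κ N m r)
    (k : ℕ) : ∃ N, ∀ {α : Type u} [LinearOrder α] (c : Finset α → κ) (S : Finset α), N ≤ #S →
      ∃ T ⊆ S, #T = k ∧ ∃ tag : α → κ,
        ∀ e ⊆ T, ∀ he : e.Nonempty, #e = r + 1 → c e = tag (e.min' he) := by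
  induction k with
  | zero => exact ⟨0, fun c S _ => ⟨∅, empty_subset S, rfl, fun _ => c ∅,
      fun e he hne => absurd (subset_empty.1 he) hne.ne_empty⟩⟩
  | succ k ih =>
    obtain ⟨Nk, hNk⟩ := ih
    obtain ⟨N, hN⟩ := hr Nk
    refine ⟨N + 1, fun {α} _ c S hS => ?_⟩
    have hS₀ : S.Nonempty := card_pos.1 (by omega)
    set x := S.min' hS₀
    have hxS : x ∈ S := S.min'_mem hS₀
    obtain ⟨U, hUS, hU, i, hUi⟩ := hN (fun e => c (insert x e)) (S.erase x)
      (by rw [card_erase_of_mem hxS]; omega)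
    obtain ⟨T, hTU, hT, tag, htag⟩ := hNk c U hU.ge
    have hxT : x ∉ T := fun h => (mem_erase.1 (hUS (hTU h))).1 rfl
    refine ⟨insert x T, insert_subset hxS ((hTU.trans hUS).trans (erase_subset x S)),
      by rw [card_insert_of_notMem hxT, hT], update tag x i, fun e he hne he_card => ?_⟩
    by_cases hxe : x ∈ e
    · have hmin : e.min' hne = x :=
        le_antisymm (e.min'_le x hxe) (e.le_min' hne x fun z hz =>
          S.min'_le z (insert_subset hxS ((hTU.trans hUS).trans (erase_subset x S)) (he hz)))
      rw [hmin, update_self, ← insert_erase hxe]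
      refine hUi _ (fun z hz => hTU ?_) (by rw [card_erase_of_mem hxe]; omega)
      exact (mem_insert.1 (he (mem_of_mem_erase hz))).resolve_left (ne_of_mem_erase hz)
    · have heT : e ⊆ T := fun z hz =>
        (mem_insert.1 (he hz)).resolve_left (by rintro rfl; exact hxe hz)
      rw [htag e heT hne he_card, update_of_ne fun h : e.min' hne = x => hxe (h ▸ e.min'_mem hne)]

variable (κ) [Fintype κ]

theorem exists_ramseyArrow (r : ℕ) : ∀ m, ∃ N, RamseyArrow.{u} κ N m r := by
  induction r with
  | zero => exact fun m => ⟨m, fun c S hS => by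
      obtain ⟨M, hMS, hM⟩ := exists_subset_card_eq hS
      exact ⟨M, hMS, hM, c ∅, fun e _ he => by rw [card_eq_zero.1 he]⟩⟩
  | succ r ih =>
    classical
    intro m
    obtain ⟨N, hN⟩ := exists_subset_color_eq_tag_min ih (Fintype.card κ * m + 1)
    refine ⟨N, fun c S hS => ?_⟩
    obtain ⟨T, hTS, hT, tag, htag⟩ := hN c S hS
    obtain ⟨k, -, hk⟩ := exists_lt_card_fiber_of_mul_lt_card_of_maps_to (n := m)
      (fun z _ => mem_univ (tag z)) (by rw [card_univ, hT]; omega)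
    obtain ⟨M, hMT, hM⟩ := exists_subset_card_eq hk.le
    have hMT' : M ⊆ T := hMT.trans (filter_subset _ T)
    refine ⟨M, hMT'.trans hTS, hM, k, fun e he he_card => ?_⟩
    have hne : e.Nonempty := card_pos.1 (by omega)
    rw [htag e (he.trans hMT') hne he_card]
    exact (mem_filter.1 (hMT (he (e.min'_mem hne)))).2

theorem exists_subset_color_eq_card (m r : ℕ) :
    ∃ N, ∀ {α : Type u} [LinearOrder α] (c : Finset α → κ) (S : Finset α), N ≤ #S →
      ∃ M ⊆ S, #M = m ∧ ∃ g : ℕ → κ, ∀ e ⊆ M, #e ≤ r → c e = g #e := by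
  induction r with
  | zero => exact ⟨m, fun c S hS => by
      obtain ⟨M, hMS, hM⟩ := exists_subset_card_eq hS
      exact ⟨M, hMS, hM, fun _ => c ∅, fun e _ he => by rw [card_eq_zero.1 (Nat.le_zero.1 he)]⟩⟩
  | succ r ih =>
    obtain ⟨N₁, hN₁⟩ := ih
    obtain ⟨N, hN⟩ := exists_ramseyArrow κ (r + 1) N₁
    refine ⟨N, fun c S hS => ?_⟩
    obtain ⟨M₁, hM₁S, hM₁, k, hk⟩ := hN c S hS
    obtain ⟨M, hMM₁, hM, g, hg⟩ := hN₁ c M₁ hM₁.ge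
    refine ⟨M, hMM₁.trans hM₁S, hM, update g (r + 1) k, fun e he he_card => ?_⟩
    obtain he_card | he_card := Nat.lt_or_eq_of_le he_card
    · rw [update_of_ne he_card.ne, hg e he (by omega)]
    · rw [he_card, update_self, hk e (he.trans hMM₁) he_card]

end Ramsey

/-- The cube embedding `B ↦ X ∆ f(B)`, with `f` mapping into `M` and `X ⊆ M` chosen to meet each
`f(K i)` in as many points as `ψ ∅` meets the `c`-image of `K' i`, where `ψ = ψ ∅ ∆ c(·)`. -/
theorem exists_cubeEmbedding_card_eq_add {ι : Type*} [Fintype ι] {d d' m n : ℕ}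
    {K : ι → Finset (Fin d)} {K' : ι → Finset (Fin d')} (hK : Pairwise (Disjoint on K))
    (hKK' : ∀ i, #(K i) = #(K' i)) {ψ : Finset (Fin d') → Finset (Fin m)}
    (hψ : IsCubeEmbedding ψ) {M : Finset (Fin n)} (hM : m + 2 * d ≤ #M) :
    ∃ φ : Finset (Fin d) → Finset (Fin n), IsCubeEmbedding φ ∧ (∀ B, φ B ⊆ M) ∧
      ∀ i, ∀ B ⊆ K i, ∃ A ⊆ K' i, #A = #B ∧ #(φ B) = #(ψ A) + d := by
  obtain ⟨c, hc, hψc⟩ := hψ.exists_eq_symmDiff_image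
  set X' := ψ ∅
  set V := fun i => (K' i).filter (c · ∈ X')
  obtain ⟨W, hW⟩ := exists_card_inter_eq hK (w := fun i => #(V i))
    fun i => hKK' i ▸ card_le_card (filter_subset _ _)
  set f : Fin d → Fin n := M.orderEmbOfFin rfl ∘ Fin.castLE (by omega)
  have hf : Injective f := (M.orderEmbOfFin rfl).injective.comp (Fin.castLE_injective _)
  have hfM : ∀ z, f z ∈ M := fun z => M.orderEmbOfFin_mem rfl _
  have hX' : #X' ≤ m := (card_le_univ X').trans_eq (Fintype.card_fin m)
  have hW_le : #W ≤ d := (card_le_univ W).trans_eq (Fintype.card_fin d)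
  obtain ⟨P, hPM, hP⟩ := exists_subset_card_eq (s := M \ univ.image f) (n := #X' + d - #W) (by
    rw [card_sdiff_of_subset (image_subset_iff.2 fun z _ => hfM z),
      card_image_of_injective _ hf, card_univ, Fintype.card_fin]
    omega)
  have hPf : ∀ B : Finset (Fin d), Disjoint P (B.image f) := fun B =>
    disjoint_of_subset_left hPM (disjoint_of_subset_right (image_subset_image (subset_univ B))
      sdiff_disjoint)
  set X := W.image f ∪ P
  have hX : #X = #X' + d := by
    rw [card_union_of_disjoint (hPf W).symm, card_image_of_injective _ hf, hP]
    omega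
  have hX_inter : ∀ B : Finset (Fin d), #(X ∩ B.image f) = #(W ∩ B) := fun B => by
    rw [union_inter_distrib_right, disjoint_iff_inter_eq_empty.1 (hPf B), union_empty,
      ← image_inter _ _ hf, card_image_of_injective _ hf]
  refine ⟨fun B => X ∆ B.image f, IsCubeEmbedding.symmDiff_image hf X, fun B => ?_,
    fun i B hB => ?_⟩
  · refine symmDiff_subset_union.trans
      (union_subset (union_subset ?_ (hPM.trans sdiff_subset)) ?_) <;>
    exact image_subset_iff.2 fun z _ => hfM z
  obtain ⟨A, hA, hAB, hAV⟩ := exists_subset_card_eq_card_inter_eq hB inter_subset_right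
    (filter_subset _ _) (hKK' i) (hW i)
  have h_inter : #(X' ∩ A.image c) = #(X ∩ B.image f) :=
    calc #(X' ∩ A.image c) = #(A ∩ V i) := by
          rw [inter_comm, ← filter_mem_eq_inter, filter_image, card_image_of_injective _ hc,
            inter_filter, inter_eq_left.2 hA]
      _ = #(B ∩ (W ∩ K i)) := hAV
      _ = #(X ∩ B.image f) := by rw [hX_inter, inter_left_comm, inter_eq_left.2 hB]
  refine ⟨A, hA, hAB, ?_⟩
  have hφ := card_symmDiff_add_two_mul_card_inter X (B.image f)
  have hψA := card_symmDiff_add_two_mul_card_inter X' (A.image c)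
  rw [card_image_of_injective _ hf] at hφ
  rw [card_image_of_injective _ hc] at hψA
  show #(X ∆ B.image f) = #(ψ A) + d
  rw [hψc A]
  omega

theorem not_ramsey_of_not_ramsey_disjoint_general (t : ℕ) (s : ℕ)
    (a tt : Fin s → ℕ) (d : ℕ) (K : Fin s → Finset (Fin d))
    (hK : ∀ i, (K i).card = a i + tt i)
    (hdisj : ∀ i j, i ≠ j → Disjoint (K i) (K j))
    (hS : ¬ IsRamsey t d (⋃ i, ↑((K i).powersetCard (a i))))
    (d' : ℕ) (K' : Fin s → Finset (Fin d'))
    (hK' : ∀ i, (K' i).card = a i + tt i) :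
    ¬ IsRamsey t d' (⋃ i, ↑((K' i).powersetCard (a i))) := by
  rintro ⟨m, hm⟩
  obtain ⟨N, hN⟩ := exists_subset_color_eq_card (Fin t) (m + 2 * d) (m + 2 * d)
  refine hS ⟨N, fun n hn χ => ?_⟩
  obtain ⟨M, -, hM, g, hg⟩ := hN χ univ (by rwa [card_univ, Fintype.card_fin])
  obtain ⟨i, ψ, hψ, hψi⟩ := hm m le_rfl fun Z => g (#Z + d)
  obtain ⟨φ, hφ, hφM, hφψ⟩ := exists_cubeEmbedding_card_eq_add (fun i j => hdisj i j)
    (fun i => (hK i).trans (hK' i).symm) hψ hM.ge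
  refine ⟨i, φ, hφ, fun B hB => ?_⟩
  obtain ⟨j, hBK, hB⟩ : ∃ j, B ⊆ K j ∧ #B = a j := by simpa using hB
  obtain ⟨A, hAK, hAB, hφB⟩ := hφψ j B hBK
  show χ (φ B) = i
  rw [hg _ (hφM B) ((card_le_card (hφM B)).trans hM.le), hφB]
  exact hψi A (by simpa using ⟨j, hAK, hAB.trans hB⟩)

/-- Lemma 6 (nondisj:lem): let `t ≥ 2` and let `S` be a vertex disjoint union of cliques
(the clique `K_i^{(a_i)}` of weight `a i` and order `a i + tt i` being all `a i`-subsets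
of a vertex set `K i` of size `a i + tt i`) which is not `t`-Ramsey. Then any union of
cliques with the same weights and orders (not necessarily vertex disjoint) is also not
`t`-Ramsey. -/
theorem not_ramsey_of_not_ramsey_disjoint (t : ℕ) (ht : 2 ≤ t) (s : ℕ)
    (a tt : Fin s → ℕ) (d : ℕ) (K : Fin s → Finset (Fin d))
    (hK : ∀ i, (K i).card = a i + tt i)
    (hdisj : ∀ i j, i ≠ j → Disjoint (K i) (K j))
    (hS : ¬ IsRamsey t d (⋃ i, ↑((K i).powersetCard (a i))))
    (d' : ℕ) (K' : Fin s → Finset (Fin d'))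
    (hK' : ∀ i, (K' i).card = a i + tt i) :
    ¬ IsRamsey t d' (⋃ i, ↑((K' i).powersetCard (a i))) :=
  not_ramsey_of_not_ramsey_disjoint_general t s a tt d K hK hdisj hS d' K' hK'
end

section
/- Let S = K_1 ∪ ... ∪ K_s ⊆ V_d be a vertex disjoint union of cliques, with K_i of weight a_i and order a_i + t_i. Let B ⊆ [d], b = |B|, b_i = |B ∩ V(K_i)|, and let ψ_B be the automorphism A ↦ A △ B of Q_d. If D_i = W_d(ψ_B(K_i)) denotes the set of layers that ψ_B(K_i) meets, then D_i = [max{a_i − 2b_i, −a_i}, min{a_i, a_i + 2(t_i − b_i)}]_2 + b. Moreover, precisely one of the following holds for each 1 ≤ i ≤ s: (i) −a_i + b ∈ D_i or a_i + b ∈ D_i; (ii) t_i < b_i < a_i and D_i = [a_i − 2b_i, a_i − 2(b_i − t_i)]_2 + b. -/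
/-- `W_d(S) = {|A| : A ∈ S}`, the set of weights (as integers) of members of `S`. -/
def weightSet {d : ℕ} (S : Set (Finset (Fin d))) : Set ℤ :=
  {w | ∃ A ∈ S, (A.card : ℤ) = w}

/-- `[x,y]_2 = {x, x+2, …, y-2, y}`: the integers between `x` and `y` of the same
parity as `x`. -/
def parityInterval (x y : ℤ) : Set ℤ := {z | x ≤ z ∧ z ≤ y ∧ 2 ∣ z - x}

lemma card_symmDiff_aux {α : Type*} [DecidableEq α] (A B : Finset α) :
    (symmDiff A B).card + 2 * (A ∩ B).card = A.card + B.card := by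
  have hd : Disjoint (A \ B) (B \ A) := disjoint_sdiff_sdiff
  have : symmDiff A B = (A \ B) ∪ (B \ A) := rfl
  rw [this, Finset.card_union_of_disjoint hd]
  have h1 := Finset.card_sdiff_add_card_inter A B
  have h2 := Finset.card_sdiff_add_card_inter B A
  rw [Finset.inter_comm B A] at h2
  omega

lemma exists_subset_inter {α : Type*} [DecidableEq α] (K B' : Finset α)
    (hB' : B' ⊆ K) (a t m : ℕ) (hK : K.card = a + t)
    (hma : m ≤ a) (hmb : m ≤ B'.card) (hbt : B'.card ≤ m + t) :
    ∃ A ⊆ K, A.card = a ∧ (A ∩ B').card = m := by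
  obtain ⟨T1, hT1, hT1c⟩ := Finset.exists_subset_card_eq hmb
  have hsd : (K \ B').card = a + t - B'.card := by
    rw [Finset.card_sdiff_of_subset hB', hK]
  have : a - m ≤ (K \ B').card := by omega
  obtain ⟨T2, hT2, hT2c⟩ := Finset.exists_subset_card_eq this
  have hdisj : Disjoint T1 T2 := by
    refine Finset.disjoint_left.2 fun x hx1 hx2 => ?_
    exact (Finset.mem_sdiff.1 (hT2 hx2)).2 (hT1 hx1)
  refine ⟨T1 ∪ T2, ?_, ?_, ?_⟩
  · exact Finset.union_subset (hT1.trans hB') (hT2.trans Finset.sdiff_subset)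
  · rw [Finset.card_union_of_disjoint hdisj]; omega
  · have h2 : T2 ∩ B' = ∅ := by
      refine Finset.eq_empty_of_forall_notMem fun x hx => ?_
      obtain ⟨hx2, hxb⟩ := Finset.mem_inter.1 hx
      exact (Finset.mem_sdiff.1 (hT2 hx2)).2 hxb
    rw [Finset.union_inter_distrib_right, h2, Finset.union_empty,
      Finset.inter_eq_left.2 hT1, hT1c]

lemma mem_weightSet_iff {d : ℕ} (K B : Finset (Fin d)) (a t : ℕ)
    (hK : K.card = a + t) (w : ℤ) :
    w ∈ weightSet ((fun A => symmDiff A B) '' ↑(K.powersetCard a)) ↔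
      ∃ m : ℕ, m ≤ a ∧ m ≤ (B ∩ K).card ∧ (B ∩ K).card ≤ m + t ∧
        w = (a : ℤ) + (B.card : ℤ) - 2 * m := by
  constructor
  · rintro ⟨C, ⟨A, hA, rfl⟩, hw⟩
    rw [Finset.mem_coe, Finset.mem_powersetCard] at hA
    obtain ⟨hAK, hAc⟩ := hA
    refine ⟨(A ∩ B).card, ?_, ?_, ?_, ?_⟩
    · rw [← hAc]; exact Finset.card_le_card Finset.inter_subset_left
    · refine Finset.card_le_card fun x hx => ?_
      obtain ⟨h1, h2⟩ := Finset.mem_inter.1 hx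
      exact Finset.mem_inter.2 ⟨h2, hAK h1⟩
    · -- (B ∩ K) \ A ⊆ K \ A, and |K \ A| = t
      have h1 : ((B ∩ K) \ A).card ≤ (K \ A).card :=
        Finset.card_le_card (Finset.sdiff_subset_sdiff Finset.inter_subset_right le_rfl)
      have h2 : (K \ A).card = t := by rw [Finset.card_sdiff_of_subset hAK, hK, hAc]; omega
      have h3 := Finset.card_sdiff_add_card_inter (B ∩ K) A
      have h4 : B ∩ K ∩ A = A ∩ B := by
        ext x
        simp only [Finset.mem_inter]
        constructor
        · rintro ⟨⟨hb, _⟩, ha⟩; exact ⟨ha, hb⟩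
        · rintro ⟨ha, hb⟩; exact ⟨⟨hb, hAK ha⟩, ha⟩
      rw [h4] at h3
      omega
    · have hw' : (((symmDiff A B).card : ℤ)) = w := hw
      have := card_symmDiff_aux A B
      rw [hAc] at this
      omega
  · rintro ⟨m, hma, hmb, hbt, rfl⟩
    have hBK : B ∩ K ⊆ K := Finset.inter_subset_right
    obtain ⟨A, hAK, hAc, hAm⟩ := exists_subset_inter K (B ∩ K) hBK a t m hK hma hmb hbt
    refine ⟨symmDiff A B, ⟨A, ?_, rfl⟩, ?_⟩
    · rw [Finset.mem_coe, Finset.mem_powersetCard]; exact ⟨hAK, hAc⟩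
    · have h4 : A ∩ (B ∩ K) = A ∩ B := by
        ext x
        simp only [Finset.mem_inter]
        constructor
        · rintro ⟨ha, hb, _⟩; exact ⟨ha, hb⟩
        · rintro ⟨ha, hb⟩; exact ⟨ha, hb, hAK ha⟩
      have := card_symmDiff_aux A B
      rw [hAc] at this
      rw [h4] at hAm
      push_cast
      omega

/-- Lemma 7 (embed:lem): let `S = K_1 ∪ … ∪ K_s ⊆ V_d` be a vertex disjoint union of
cliques, `K_i` of weight `a i` and order `a i + tt i`, let `B ⊆ [d]`, `b = |B|`,
`b_i = |B ∩ V(K_i)|`, and let `ψ_B : A ↦ A ∆ B`. If `D i` is the set of layers met by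
`ψ_B(K_i)` then `D i = [max{a_i - 2b_i, -a_i}, min{a_i, a_i + 2(t_i - b_i)}]_2 + b`,
and moreover precisely one of the following holds for each `i`:
(i) `-a_i + b ∈ D i` or `a_i + b ∈ D i`;
(ii) `t_i < b_i < a_i` and `D i = [a_i - 2b_i, a_i - 2(b_i - t_i)]_2 + b`. -/
theorem layers_of_symmDiff_image (d s : ℕ) (a tt : Fin s → ℕ)
    (K : Fin s → Finset (Fin d))
    (hK : ∀ i, (K i).card = a i + tt i)
    (hdisj : ∀ i j, i ≠ j → Disjoint (K i) (K j))
    (B : Finset (Fin d)) (b : ℕ) (hb : b = B.card)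
    (bb : Fin s → ℕ) (hbb : ∀ i, bb i = (B ∩ K i).card)
    (D : Fin s → Set ℤ)
    (hD : ∀ i, D i =
      weightSet ((fun A => symmDiff A B) '' ↑((K i).powersetCard (a i)))) :
    ∀ i : Fin s,
      (D i = (fun z => z + (b : ℤ)) ''
        parityInterval (max ((a i : ℤ) - 2 * (bb i : ℤ)) (-(a i : ℤ)))
          (min ((a i : ℤ)) ((a i : ℤ) + 2 * ((tt i : ℤ) - (bb i : ℤ))))) ∧
      Xor'
        ((-(a i : ℤ) + (b : ℤ) ∈ D i) ∨ ((a i : ℤ) + (b : ℤ) ∈ D i))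
        (tt i < bb i ∧ bb i < a i ∧
          D i = (fun z => z + (b : ℤ)) ''
            parityInterval ((a i : ℤ) - 2 * (bb i : ℤ))
              ((a i : ℤ) - 2 * ((bb i : ℤ) - (tt i : ℤ)))) := by
  intro i
  have hbi_le : bb i ≤ a i + tt i := by
    rw [hbb i, ← hK i]
    exact Finset.card_le_card Finset.inter_subset_right
  -- membership characterization of D i
  have hmem : ∀ w : ℤ, w ∈ D i ↔
      ∃ m : ℕ, m ≤ a i ∧ m ≤ bb i ∧ bb i ≤ m + tt i ∧
        w = (a i : ℤ) + (b : ℤ) - 2 * m := by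
    intro w
    rw [hD i, mem_weightSet_iff (K i) B (a i) (tt i) (hK i) w, hbb i, hb]
  have hDeq : D i = (fun z => z + (b : ℤ)) ''
      parityInterval (max ((a i : ℤ) - 2 * (bb i : ℤ)) (-(a i : ℤ)))
        (min ((a i : ℤ)) ((a i : ℤ) + 2 * ((tt i : ℤ) - (bb i : ℤ)))) := by
    ext w
    rw [hmem w]
    simp only [Set.mem_image, parityInterval, Set.mem_setOf_eq]
    constructor
    · rintro ⟨m, hma, hmb, hbt, rfl⟩
      exact ⟨(a i : ℤ) - 2 * m, by omega, by ring⟩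
    · rintro ⟨z, ⟨h1, h2, h3⟩, rfl⟩
      have h4 : (2:ℤ) ∣ (a i : ℤ) - z := by omega
      obtain ⟨k, hk⟩ := h4
      refine ⟨k.toNat, by omega, by omega, by omega, by
        have : (k.toNat : ℤ) = k := Int.toNat_of_nonneg (by omega)
        omega⟩
  refine ⟨hDeq, ?_⟩
  by_cases hcase : tt i < bb i ∧ bb i < a i
  · -- case (ii)
    obtain ⟨h1, h2⟩ := hcase
    refine Or.inr ⟨⟨h1, h2, ?_⟩, fun h => ?_⟩
    · rw [hDeq]
      congr 1
      have e1 : max ((a i : ℤ) - 2 * (bb i : ℤ)) (-(a i : ℤ)) =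
          (a i : ℤ) - 2 * (bb i : ℤ) := by omega
      have e2 : min ((a i : ℤ)) ((a i : ℤ) + 2 * ((tt i : ℤ) - (bb i : ℤ))) =
          (a i : ℤ) - 2 * ((bb i : ℤ) - (tt i : ℤ)) := by omega
      rw [e1, e2]
    · rcases h with h | h <;>
      · rw [hmem] at h
        obtain ⟨m, hma, hmb, hbt, heq⟩ := h
        omega
  · -- case (i)
    refine Or.inl ⟨?_, fun h => hcase ⟨h.1, h.2.1⟩⟩
    rcases Nat.lt_or_ge (tt i) (bb i) with h | h
    · -- then a i ≤ bb i, take m = a i, weight -a+b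
      left
      rw [hmem]
      have : a i ≤ bb i := by omega
      exact ⟨a i, le_rfl, this, by omega, by push_cast; ring⟩
    · -- bb i ≤ tt i, take m = bb i, weight... a+b needs m = 0? m ≤ bb i, bb i ≤ m + tt i with m = 0: bb i ≤ tt i ✓
      right
      rw [hmem]
      exact ⟨0, Nat.zero_le _, Nat.zero_le _, by omega, by push_cast; ring⟩
end

section
/- Let S = K_1 ∪ K_2 be the vertex disjoint union of two cliques of weights a_1 and a_2 and orders a_1 + t_1 and a_2 + t_2 respectively, with a_1 = p_1·2^{r_1}, a_2 = p_2·2^{r_2}, t_1, t_2, r_1, r_2 ≥ 0, r_1 ≤ r_2, and p_1, p_2 odd. If r_1 = r_2 then S is 2-Ramsey. -/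
/-!
By the hypergraph Ramsey theorem, for large `n` every 2-colouring of `Q_n` admits a large set `L`
of coordinates such that the colour of each small subset of `L` depends only on its size, through
some `φ : ℕ → Fin 2`. The copies `A ↦ E ∪ σ(W ∆ A)` of `Q_d` inside `L` then reduce the claim to
`φ`: with `W = ∅` it suffices that `φ (t₂ + z + a₁) = φ (t₂ + z + a₂)`, with `W = K₂` that
`φ (t₂ + z) = φ (t₂ + z + a₁ + a₂)`. If both failed for every small `z`, `φ (t₂ + ·)` would
alternate along steps `a₂ - a₁` and `a₁ + a₂`, and as `a₁`, `a₂` have the same 2-adic valuation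
these steps close an odd cycle.
-/

open Finset
open scoped symmDiff

lemma Fin.two_eq_iff_ne_of_ne {a b c : Fin 2} (h : a ≠ b) : a = c ↔ b ≠ c := by
  fin_cases a <;> fin_cases b <;> fin_cases c <;> simp_all

lemma eq_iff_even_of_forall_ne {h : ℕ → Fin 2} {x s n : ℕ}
    (hne : ∀ i < n, h (x + i * s) ≠ h (x + (i + 1) * s)) : h (x + n * s) = h x ↔ Even n := by
  induction n with
  | zero => simp
  | succ n ih =>
    rw [Fin.two_eq_iff_ne_of_ne (hne n n.lt_succ_self).symm, Nat.even_add_one]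
    exact (ih fun i hi => hne i (hi.trans n.lt_succ_self)).not

/-- The progressions from `x` with steps `s` and `q` meet at `x + k * s = x + l * q`, closing an
odd cycle, along which no 2-colouring alternates. -/
lemma exists_eq_step_of_odd_cycle (h : ℕ → Fin 2) {x s q k l : ℕ} (hkl : k * s = l * q)
    (hodd : Odd (k + l)) :
    (∃ i < k, h (x + i * s) = h (x + (i + 1) * s)) ∨
      ∃ j < l, h (x + j * q) = h (x + (j + 1) * q) := by
  by_contra! ⟨hs, hq⟩
  have hk := eq_iff_even_of_forall_ne hs
  rw [hkl, eq_iff_even_of_forall_ne hq] at hk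
  rw [Nat.odd_add, ← Nat.not_even_iff_odd] at hodd
  tauto

lemma exists_bound_mono_pair_of_eq_two_adic {a1 a2 p1 p2 r : ℕ} (ha1 : a1 = p1 * 2 ^ r)
    (ha2 : a2 = p2 * 2 ^ r) (hp1 : Odd p1) (hp2 : Odd p2) :
    ∃ N, ∀ h : ℕ → Fin 2, ∃ z ≤ N, h (z + a1) = h (z + a2) ∨ h z = h (z + (a1 + a2)) := by
  wlog hle : p1 ≤ p2 generalizing a1 a2 p1 p2
  · obtain ⟨N, hN⟩ := this ha2 ha1 hp2 hp1 (by omega)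
    refine ⟨N, fun h => ?_⟩
    obtain ⟨z, hz, hpair⟩ := hN h
    exact ⟨z, hz, by rwa [eq_comm, add_comm a1]⟩
  obtain ⟨u, rfl⟩ := hp1
  obtain ⟨α, rfl⟩ : ∃ α, p2 = 2 * u + 1 + 2 * α := by
    obtain ⟨v, rfl⟩ := hp2
    exact ⟨v - u, by omega⟩
  -- the steps `s = a2 - a1` and `q = a1 + a2` satisfy `β * s = α * q` with `α + β = p2` odd
  obtain ⟨β, hβ⟩ : ∃ β, β = 2 * u + α + 1 := ⟨_, rfl⟩
  have hcycle : β * (2 * α * 2 ^ r) = α * (2 * β * 2 ^ r) := by ring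
  have hodd : Odd (β + α) := by convert hp2 using 1; omega
  refine ⟨β * (2 * α * 2 ^ r) + a1 + α * (2 * β * 2 ^ r), fun h => ?_⟩
  rcases exists_eq_step_of_odd_cycle h (x := a1) hcycle hodd with ⟨i, hi, heq⟩ | ⟨j, hj, heq⟩
  · refine ⟨i * (2 * α * 2 ^ r), le_add_right (le_add_right (Nat.mul_le_mul_right _ hi.le)),
      Or.inl ?_⟩
    convert heq using 2 <;> subst ha1 ha2 <;> ring
  · have hjq := Nat.mul_le_mul_right (2 * β * 2 ^ r) hj.le
    refine ⟨a1 + j * (2 * β * 2 ^ r), by omega, Or.inr ?_⟩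
    convert heq using 2; subst ha1 ha2 hβ; ring

universe u

def HypergraphRamsey (ι : Type*) (k : ℕ) : Prop :=
  ∀ m, ∃ N, ∀ {α : Type u} [LinearOrder α] (A : Finset α), N ≤ #A → ∀ c : Finset α → ι,
    ∃ H ⊆ A, m ≤ #H ∧ ∃ i, ∀ S ⊆ H, #S = k → c S = i

/-- The colour of a `(k+1)`-set then depends only on its least element. -/
lemma HypergraphRamsey.exists_minHomogeneous {ι : Type*} {k : ℕ} (hk : HypergraphRamsey.{u} ι k)
    (M : ℕ) :
    ∃ N, ∀ {α : Type u} [LinearOrder α] (A : Finset α), N ≤ #A → ∀ c : Finset α → ι,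
      ∃ H ⊆ A, #H = M ∧ ∃ φ : α → ι, ∀ x ∈ H, ∀ T ⊆ H, (∀ y ∈ T, x < y) → #T = k →
        c (insert x T) = φ x := by
  induction M with
  | zero =>
    refine ⟨0, fun A _ c => ⟨∅, empty_subset _, card_empty, fun _ => c ∅, ?_⟩⟩
    simp
  | succ M ih =>
    obtain ⟨N', hN'⟩ := ih
    obtain ⟨N, hN⟩ := hk N'
    refine ⟨N + 1, fun {α} _ A hA c => ?_⟩
    have hAne : A.Nonempty := card_pos.mp (by omega)
    set x := A.min' hAne
    obtain ⟨H₁, hH₁A, hH₁, i, hi⟩ :=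
      hN (A.erase x) (by rw [card_erase_of_mem (min'_mem A hAne)]; omega)
        fun T => c (insert x T)
    obtain ⟨H₂, hH₂H₁, hH₂, φ, hφ⟩ := hN' H₁ hH₁ c
    have hxlt : ∀ y ∈ H₂, x < y := fun y hy =>
      lt_of_le_of_ne (min'_le A y (mem_of_mem_erase (hH₁A (hH₂H₁ hy))))
        (ne_of_mem_erase (hH₁A (hH₂H₁ hy))).symm
    have hxH₂ : x ∉ H₂ := fun hx => lt_irrefl x (hxlt x hx)
    refine ⟨insert x H₂, insert_subset (min'_mem A hAne)
        ((hH₂H₁.trans hH₁A).trans (erase_subset x A)),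
      by rw [card_insert_of_notMem hxH₂, hH₂], Function.update φ x i, ?_⟩
    intro y hy T hT hyT hTk
    have hxy : x ≤ y := (mem_insert.mp hy).elim ge_of_eq fun hy => (hxlt y hy).le
    have hTH₂ : T ⊆ H₂ := fun z hz => (mem_insert.mp (hT hz)).resolve_left fun hzx =>
      lt_irrefl x (hxy.trans_lt (hzx ▸ hyT z hz))
    rcases mem_insert.mp hy with rfl | hy
    · rw [Function.update_self]
      exact hi T (hTH₂.trans hH₂H₁) hTk
    · rw [Function.update_of_ne (hxlt y hy).ne']
      exact hφ y hy T hTH₂ hyT hTk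

theorem hypergraphRamsey (ι : Type*) [Fintype ι] (k : ℕ) : HypergraphRamsey.{u} ι k := by
  induction k with
  | zero =>
    refine fun m => ⟨m, fun A hA c => ⟨A, subset_rfl, hA, c ∅, fun S _ hS => ?_⟩⟩
    rw [card_eq_zero.mp hS]
  | succ k ih =>
    classical
    intro m
    obtain ⟨N, hN⟩ := ih.exists_minHomogeneous (Fintype.card ι * m)
    refine ⟨N, fun A hA c => ?_⟩
    obtain ⟨H, hHA, hH, φ, hφ⟩ := hN A hA c
    have : Nonempty ι := ⟨c ∅⟩
    obtain ⟨i, -, hi⟩ := exists_le_card_fiber_of_mul_le_card_of_maps_to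
      (fun x _ => mem_univ (φ x)) univ_nonempty (by rw [card_univ, hH])
    refine ⟨H.filter (φ · = i), (filter_subset _ _).trans hHA, hi, i, fun S hS hSk => ?_⟩
    have hSne : S.Nonempty := card_pos.mp (by omega)
    have hmin := hS (min'_mem S hSne)
    rw [mem_filter] at hmin
    rw [← insert_erase (min'_mem S hSne), ← hmin.2]
    exact hφ _ hmin.1 _ ((erase_subset _ S).trans (hS.trans (filter_subset _ _)))
      (fun y hy => min'_lt_of_mem_erase_min' S hSne hy)
      (by rw [card_erase_of_mem (min'_mem S hSne), hSk]; rfl)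

def IsLayeredOn {α ι : Type*} (c : Finset α → ι) (L : Finset α) (K : ℕ) (φ : ℕ → ι) : Prop :=
  ∀ B ⊆ L, #B ≤ K → c B = φ #B

theorem exists_isLayeredOn (ι : Type*) [Fintype ι] (K m : ℕ) :
    ∃ N, ∀ {α : Type u} [LinearOrder α] (A : Finset α), N ≤ #A → ∀ c : Finset α → ι,
      ∃ L ⊆ A, m ≤ #L ∧ ∃ φ, IsLayeredOn c L K φ := by
  induction K with
  | zero =>
    refine ⟨m, fun A hA c => ⟨A, subset_rfl, hA, fun _ => c ∅, fun B _ hB => ?_⟩⟩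
    rw [card_eq_zero.mp (Nat.le_zero.mp hB)]
  | succ K ih =>
    obtain ⟨N', hN'⟩ := ih
    obtain ⟨N, hN⟩ := hypergraphRamsey.{u} ι (K + 1) N'
    refine ⟨N, fun A hA c => ?_⟩
    obtain ⟨H, hHA, hH, i, hi⟩ := hN A hA c
    obtain ⟨L, hLH, hL, φ, hφ⟩ := hN' H hH c
    refine ⟨L, hLH.trans hHA, hL, Function.update φ (K + 1) i, fun B hBL hBK => ?_⟩
    rcases hBK.lt_or_eq with hBK | hBK
    · rw [Function.update_of_ne hBK.ne]
      exact hφ B hBL (Nat.le_of_lt_succ hBK)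
    · rw [hBK, Function.update_self]
      exact hi B (hBL.trans hLH) hBK

lemma isCubeEmbedding_of_symmDiff_eq_image {d n : ℕ} {ψ : Finset (Fin d) → Finset (Fin n)}
    {σ : Fin d → Fin n} (hσ : Function.Injective σ)
    (hψ : ∀ A B, ψ A ∆ ψ B = (A ∆ B).image σ) : IsCubeEmbedding ψ := by
  refine ⟨fun A B hAB => ?_, fun A B hAB => by rw [hψ, card_image_of_injective _ hσ, hAB]⟩
  have h := hψ A B
  rwa [hAB, symmDiff_self, eq_comm, bot_eq_empty, image_eq_empty, symmDiff_eq_empty] at h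

/-- The copy `A ↦ E ∪ σ(W ∆ A)`, with `σ` an injection into `L` and `E ⊆ L` avoiding its range,
lies in `L`, so its colours are read off its sizes. -/
lemma containsCopy_of_isLayeredOn {ι : Type*} {d n K : ℕ} {c : Finset (Fin n) → ι}
    {L : Finset (Fin n)} {φ : ℕ → ι} (hc : IsLayeredOn c L K φ) {F : Set (Finset (Fin d))}
    (W : Finset (Fin d)) (e : ℕ) (i : ι) (hL : d + e ≤ #L)
    (hF : ∀ A ∈ F, e + #(W ∆ A) ≤ K ∧ φ (e + #(W ∆ A)) = i) :
    ContainsCopy F {B | c B = i} := by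
  obtain ⟨D, hDL, hD⟩ := exists_subset_card_eq (show d ≤ #L by omega)
  obtain ⟨E, hED, hE⟩ := exists_subset_card_eq
    (show e ≤ #(L \ D) by rw [card_sdiff_of_subset hDL]; omega)
  set σ := D.orderEmbOfFin hD
  have hσD : ∀ X : Finset (Fin d), X.image σ ⊆ D := fun X =>
    image_subset_iff.mpr fun x _ => D.orderEmbOfFin_mem hD x
  have hdisj : ∀ X : Finset (Fin d), Disjoint E (X.image σ) := fun X =>
    disjoint_of_subset_right (hσD X) (disjoint_of_subset_left hED sdiff_disjoint)
  refine ⟨fun A => E ∆ (W ∆ A).image σ, isCubeEmbedding_of_symmDiff_eq_image σ.injective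
    fun A B => ?_, fun A hA => ?_⟩
  · rw [symmDiff_symmDiff_symmDiff_comm, symmDiff_self, bot_symmDiff,
      ← image_symmDiff _ _ σ.injective, symmDiff_symmDiff_symmDiff_comm, symmDiff_self,
      bot_symmDiff]
  · have hcard : #(E ∆ (W ∆ A).image σ) = e + #(W ∆ A) := by
      rw [symmDiff_eq_union (hdisj _), card_union_of_disjoint (hdisj _), hE,
        card_image_of_injective _ σ.injective]
    have hsub : E ∆ (W ∆ A).image σ ⊆ L := by
      rw [symmDiff_eq_union (hdisj _)]
      exact union_subset (hED.trans sdiff_subset) ((hσD _).trans hDL)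
    show c _ = i
    rw [hc _ hsub (hcard ▸ (hF A hA).1), hcard, (hF A hA).2]

theorem two_cliques_ramsey_of_eq_val_general (d a1 a2 t2 p1 p2 r1 r2 : ℕ)
    (ha1 : a1 = p1 * 2 ^ r1) (ha2 : a2 = p2 * 2 ^ r2)
    (hp1 : Odd p1) (hp2 : Odd p2) (hr : r1 = r2)
    (K1 K2 : Finset (Fin d)) (hK2 : K2.card = a2 + t2)
    (hdisj : Disjoint K1 K2) :
    IsRamsey 2 d (↑(K1.powersetCard a1) ∪ ↑(K2.powersetCard a2)) := by
  subst hr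
  obtain ⟨N, hN⟩ := exists_bound_mono_pair_of_eq_two_adic ha1 ha2 hp1 hp2
  obtain ⟨n₀, hn₀⟩ := exists_isLayeredOn (Fin 2) (N + t2 + a1 + a2) (d + N + t2)
  refine ⟨n₀, fun n hn c => ?_⟩
  obtain ⟨L, -, hL, φ, hφ⟩ := hn₀ (univ : Finset (Fin n)) (by simpa using hn) c
  obtain ⟨z, hz, hpair | hpair⟩ := hN fun w => φ (t2 + w)
  · refine ⟨_, containsCopy_of_isLayeredOn hφ ∅ (t2 + z) (φ (t2 + z + a1)) (by omega) ?_⟩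
    rintro A (hA | hA) <;> obtain ⟨-, rfl⟩ := mem_powersetCard.mp hA <;>
      rw [← bot_eq_empty, bot_symmDiff]
    · exact ⟨by omega, rfl⟩
    · exact ⟨by omega, by simpa only [add_assoc] using hpair.symm⟩
  · refine ⟨_, containsCopy_of_isLayeredOn hφ K2 z (φ (t2 + z)) (by omega) ?_⟩
    rintro A (hA | hA) <;> obtain ⟨hAK, rfl⟩ := mem_powersetCard.mp hA
    · have hA : Disjoint K2 A := disjoint_of_subset_right hAK hdisj.symm
      rw [symmDiff_eq_union hA, card_union_of_disjoint hA, hK2]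
      exact ⟨by omega, by convert hpair.symm using 2; omega⟩
    · rw [symmDiff_of_ge hAK, card_sdiff_of_subset hAK, hK2]
      exact ⟨by omega, by congr 1; omega⟩

/-- Lemma 9(b) (2cliquesa:lem(b)): let `S = K_1 ∪ K_2` be the vertex disjoint union of
two cliques of weights `a1, a2` and orders `a1 + t1, a2 + t2`, with `a1 = p1·2^r1`,
`a2 = p2·2^r2`, `p1, p2` odd and `r1 ≤ r2`. If `r1 = r2` then `S` is `2`-Ramsey. -/
theorem two_cliques_ramsey_of_eq_val (d a1 a2 t1 t2 p1 p2 r1 r2 : ℕ)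
    (ha1 : a1 = p1 * 2 ^ r1) (ha2 : a2 = p2 * 2 ^ r2)
    (hp1 : Odd p1) (hp2 : Odd p2) (hr : r1 = r2)
    (K1 K2 : Finset (Fin d)) (hK1 : K1.card = a1 + t1) (hK2 : K2.card = a2 + t2)
    (hdisj : Disjoint K1 K2) :
    IsRamsey 2 d (↑(K1.powersetCard a1) ∪ ↑(K2.powersetCard a2)) :=
  two_cliques_ramsey_of_eq_val_general d a1 a2 t2 p1 p2 r1 r2 ha1 ha2 hp1 hp2 hr K1 K2 hK2 hdisj
end

section
/- Let S = K_1 ∪ K_2 be the vertex disjoint union of two cliques of weights a_1 and a_2 and orders a_1 + t_1 and a_2 + t_2 respectively, with a_1 = p_1·2^{r_1}, a_2 = p_2·2^{r_2}, t_1, t_2, r_1, r_2 ≥ 0, r_1 < r_2, and p_1, p_2 odd, and let d = gcd(p_1, p_2). For a 2-coloring c of ℤ, there is no monochromatic translate of either of the sets {0, |a_1 − a_2|} and {0, a_1 + a_2} if and only if c(x) ≠ c(y) for all integers x, y with |x − y| = d·2^{r_1}. -/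
/-!
Call `m` a flip step of `c : ℤ → Fin 2` if `c (j + m) = c j + 1` for every `j`. If `g` is a flip
step then so is every odd multiple of `g`, while by Bézout a common divisor `g` of two flip steps
`u * g` and `v * g` with `u`, `v` odd and coprime is itself one: `g = α u g + β v g` and
`α + β ≡ α u + β v = 1 (mod 2)`. Writing `p₁ = P₁ G`, `p₂ = P₂ G` with `G = gcd(p₁, p₂)` and
`s = r₂ - r₁ > 0`, we get `a₁ ∓ a₂ = (P₁ ∓ P₂ 2^s) · G 2^r₁`, and the two cofactors are odd and
coprime because `P₁` is odd, `P₂ 2^s` is even and `P₁`, `P₂ 2^s` are coprime.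
-/

open Fin.CommRing

def IsFlipStep (c : ℤ → Fin 2) (m : ℤ) : Prop :=
  ∀ j, c (j + m) = c j + 1

lemma Fin.two_ne_iff_eq_add_one {x y : Fin 2} : x ≠ y ↔ y = x + 1 := by decide +revert

lemma Fin.two_intCast_of_odd {k : ℤ} (hk : Odd k) : (k : Fin 2) = 1 :=
  ZMod.intCast_eq_one_iff_odd.mpr hk

namespace IsFlipStep

variable {c : ℤ → Fin 2} {m g : ℤ}

lemma iff_not_exists_eq : IsFlipStep c m ↔ ¬ ∃ j, c j = c (j + m) := by
  simp only [IsFlipStep, not_exists, ← ne_eq, Fin.two_ne_iff_eq_add_one]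

lemma iff_forall_abs_sub_eq (hg : 0 ≤ g) :
    IsFlipStep c g ↔ ∀ x y, |x - y| = g → c x ≠ c y := by
  constructor
  · intro h x y hxy
    rcases (abs_eq hg).mp hxy with hx | hx
    · rw [show x = y + g by omega, h]
      exact (Fin.two_ne_iff_eq_add_one).mpr rfl |>.symm
    · rw [show y = x + g by omega, h]
      exact (Fin.two_ne_iff_eq_add_one).mpr rfl
  · intro h j
    exact (Fin.two_ne_iff_eq_add_one).mp (h j (j + g) (by simpa using abs_of_nonneg hg))

lemma add_mul (h : IsFlipStep c m) (k j : ℤ) : c (j + k * m) = c j + k := by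
  induction k using Int.induction_on generalizing j with
  | zero => simp
  | succ k ih =>
    rw [show j + (k + 1) * m = j + k * m + m by ring, h, ih]
    push_cast
    ring
  | pred k ih =>
    have hstep := h (j + (-k - 1) * m)
    rw [show j + (-k - 1) * m + m = j + -k * m by ring, ih] at hstep
    rw [eq_sub_of_add_eq hstep.symm]
    push_cast
    ring

lemma odd_mul (h : IsFlipStep c g) {k : ℤ} (hk : Odd k) : IsFlipStep c (k * g) := fun j => by
  rw [h.add_mul, Fin.two_intCast_of_odd hk]

lemma neg (h : IsFlipStep c m) : IsFlipStep c (-m) := by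
  simpa using h.odd_mul odd_neg_one

lemma abs_iff : IsFlipStep c |m| ↔ IsFlipStep c m := by
  rcases abs_choice m with h | h <;> rw [h]
  exact ⟨fun h => by simpa using h.neg, neg⟩

lemma of_mul_of_mul {u v : ℤ} (hu : Odd u) (hv : Odd v) (huv : IsCoprime u v)
    (hug : IsFlipStep c (u * g)) (hvg : IsFlipStep c (v * g)) : IsFlipStep c g := by
  obtain ⟨α, β, hαβ⟩ := huv
  intro j
  have hsum : (α : Fin 2) + β = 1 := by
    have := congrArg (fun z : ℤ => (z : Fin 2)) hαβ
    push_cast at this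
    rwa [Fin.two_intCast_of_odd hu, Fin.two_intCast_of_odd hv, mul_one, mul_one] at this
  calc c (j + g) = c (j + α * (u * g) + β * (v * g)) := by
        congr 1; linear_combination (-g) * hαβ
    _ = c j + 1 := by rw [hvg.add_mul, hug.add_mul, add_assoc, hsum]

lemma mul_and_mul_iff {u v : ℤ} (hu : Odd u) (hv : Odd v) (huv : IsCoprime u v) :
    IsFlipStep c (u * g) ∧ IsFlipStep c (v * g) ↔ IsFlipStep c g :=
  ⟨fun h => of_mul_of_mul hu hv huv h.1 h.2, fun h => ⟨h.odd_mul hu, h.odd_mul hv⟩⟩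

end IsFlipStep

lemma IsCoprime.sub_add {R : Type*} [CommRing R] {x y : R} (h : IsCoprime x y)
    (h2 : IsCoprime 2 (x + y)) : IsCoprime (x - y) (x + y) := by
  have hx : IsCoprime x (x + y) := by simpa [add_comm] using h.add_mul_left_right 1
  have h2x : IsCoprime (x - y + (x + y) * 1) (x + y) := by
    rw [show x - y + (x + y) * 1 = 2 * x by ring]
    exact h2.mul_left hx
  exact h2x.of_add_mul_left_left

lemma exists_odd_isCoprime_cofactors {p₁ p₂ r₁ r₂ : ℕ} (hp₁ : Odd p₁) (hr : r₁ < r₂) :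
    ∃ u v : ℤ, Odd u ∧ Odd v ∧ IsCoprime u v ∧
      (p₁ * 2 ^ r₁ - p₂ * 2 ^ r₂ : ℤ) = u * (Nat.gcd p₁ p₂ * 2 ^ r₁) ∧
      (p₁ * 2 ^ r₁ + p₂ * 2 ^ r₂ : ℤ) = v * (Nat.gcd p₁ p₂ * 2 ^ r₁) := by
  obtain ⟨P₁, P₂, hcop, hP₁, hP₂⟩ := Nat.exists_coprime p₁ p₂
  obtain ⟨s, rfl⟩ := Nat.exists_eq_add_of_lt hr
  have hP₁odd : Odd (P₁ : ℤ) := by exact_mod_cast (Nat.odd_mul.mp (hP₁ ▸ hp₁)).1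
  have hy : Even ((P₂ : ℤ) * 2 ^ (s + 1)) := (even_two.pow_of_ne_zero s.succ_ne_zero).mul_left _
  have hcop' : IsCoprime (P₁ : ℤ) (P₂ * 2 ^ (s + 1)) :=
    (Nat.isCoprime_iff_coprime.mpr hcop).mul_right (Int.isCoprime_two_right.mpr hP₁odd).pow_right
  have hP₁' : (p₁ : ℤ) = P₁ * Nat.gcd p₁ p₂ := by exact_mod_cast hP₁
  have hP₂' : (p₂ : ℤ) = P₂ * Nat.gcd p₁ p₂ := by exact_mod_cast hP₂
  refine ⟨_, _, hP₁odd.sub_even hy, hP₁odd.add_even hy,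
    hcop'.sub_add (Int.isCoprime_two_left.mpr (hP₁odd.add_even hy)), ?_, ?_⟩
  · linear_combination 2 ^ r₁ * hP₁' - 2 ^ (r₁ + s + 1) * hP₂'
  · linear_combination 2 ^ r₁ * hP₁' + 2 ^ (r₁ + s + 1) * hP₂'

theorem two_cliques_coloring_characterization_general (a1 a2 p1 p2 r1 r2 : ℕ)
    (ha1 : a1 = p1 * 2 ^ r1) (ha2 : a2 = p2 * 2 ^ r2)
    (hp1 : Odd p1) (hr : r1 < r2)
    (c : ℤ → Fin 2) :
    ((¬ ∃ j : ℤ, c j = c (j + |(a1 : ℤ) - (a2 : ℤ)|)) ∧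
      (¬ ∃ j : ℤ, c j = c (j + ((a1 : ℤ) + (a2 : ℤ))))) ↔
    (∀ x y : ℤ, |x - y| = (Nat.gcd p1 p2 : ℤ) * 2 ^ r1 → c x ≠ c y) := by
  obtain ⟨u, v, hu, hv, huv, hdiff, hsum⟩ := exists_odd_isCoprime_cofactors hp1 hr
  rw [← IsFlipStep.iff_not_exists_eq, ← IsFlipStep.iff_not_exists_eq, IsFlipStep.abs_iff,
    ← IsFlipStep.iff_forall_abs_sub_eq (by positivity), ha1, ha2]
  push_cast
  rw [hdiff, hsum]
  exact IsFlipStep.mul_and_mul_iff hu hv huv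

/-- Lemma 9(c) (2cliquesa:lem(c)): let `S = K_1 ∪ K_2` be the vertex disjoint union of
two cliques of weights `a1, a2` and orders `a1 + t1, a2 + t2`, with `a1 = p1·2^r1`,
`a2 = p2·2^r2`, `p1, p2` odd and `r1 < r2`, and let `g = gcd(p1, p2)`. A `2`-coloring
`c` of `ℤ` has no monochromatic translate of either of the sets `{0, |a1 - a2|}` and
`{0, a1 + a2}` iff `c x ≠ c y` whenever `|x - y| = g·2^r1`. -/
theorem two_cliques_coloring_characterization (d a1 a2 t1 t2 p1 p2 r1 r2 : ℕ)
    (ha1 : a1 = p1 * 2 ^ r1) (ha2 : a2 = p2 * 2 ^ r2)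
    (hp1 : Odd p1) (hp2 : Odd p2) (hr : r1 < r2)
    (K1 K2 : Finset (Fin d)) (hK1 : K1.card = a1 + t1) (hK2 : K2.card = a2 + t2)
    (hdisj : Disjoint K1 K2)
    (c : ℤ → Fin 2) :
    ((¬ ∃ j : ℤ, c j = c (j + |(a1 : ℤ) - (a2 : ℤ)|)) ∧
      (¬ ∃ j : ℤ, c j = c (j + ((a1 : ℤ) + (a2 : ℤ))))) ↔
    (∀ x y : ℤ, |x - y| = (Nat.gcd p1 p2 : ℤ) * 2 ^ r1 → c x ≠ c y) :=
  two_cliques_coloring_characterization_general a1 a2 p1 p2 r1 r2 ha1 ha2 hp1 hr c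
end

section
/- For each positive integer m divisible by 4, there exists a 2-coloring c of ℤ such that c(x) ≠ c(y) for all x, y with |x − y| = m, and there is no integer z with c(z) = c(z+2) = c(z+4). -/
private lemma fin2_if_eq (a b : ℤ) :
    ((if a % 2 = 0 then (0 : Fin 2) else 1) = (if b % 2 = 0 then (0 : Fin 2) else 1)) ↔
      (2 ∣ a ↔ 2 ∣ b) := by
  constructor
  · intro h
    split_ifs at h with h1 h2 h2
    · omega
    · exact absurd h (by decide)
    · exact absurd h (by decide)
    · omega
  · intro h
    split_ifs with h1 h2 h2 <;> omega

/-- Lemma 10 (2cliquesb:lem): for each positive integer `m` divisible by `4` there is a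
`2`-coloring `c` of `ℤ` such that `c x ≠ c y` whenever `|x - y| = m`, and there is no
`z` with `c z = c (z+2) = c (z+4)`. -/
theorem exists_coloring_m_apart_ne (m : ℕ) (hm : 0 < m) (h4 : 4 ∣ m) :
    ∃ c : ℤ → Fin 2,
      (∀ x y : ℤ, |x - y| = (m : ℤ) → c x ≠ c y) ∧
      ∀ z : ℤ, ¬ (c z = c (z + 2) ∧ c (z + 2) = c (z + 4)) := by
  obtain ⟨k, rfl⟩ := h4
  have hk : 0 < (k : ℤ) := by exact_mod_cast by omega
  set K : ℤ := (k : ℤ) with hK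
  have hMcast : ((4 * k : ℕ) : ℤ) = 4 * K := by push_cast; ring
  set d : ℤ → ℤ := fun x => x / 2 + x / (4 * K) with hd
  refine ⟨fun x => if d x % 2 = 0 then 0 else 1, ?_, ?_⟩
  · -- points m apart get different colors
    intro x y hxy
    have hM : (0:ℤ) < 4 * K := by linarith
    have key : ∀ t : ℤ, d (t + 4 * K) % 2 ≠ d t % 2 := by
      intro t
      have h2 : (t + 4 * K) / 2 = t / 2 + 2 * K := by
        have := Int.add_mul_ediv_right t (2 * K) (two_ne_zero)
        rw [show t + 4 * K = t + (2 * K) * 2 by ring]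
        rw [this]
      have hM' : (t + 4 * K) / (4 * K) = t / (4 * K) + 1 := by
        have := Int.add_mul_ediv_right t 1 (ne_of_gt hM)
        rw [show t + 4 * K = t + 1 * (4 * K) by ring]
        rw [this]
      simp only [hd, h2, hM']
      omega
    have heq : y = x + 4 * K ∨ x = y + 4 * K := by
      rw [hMcast] at hxy
      rcases abs_eq (le_of_lt hM) |>.mp hxy with h | h
      · right; linarith
      · left; linarith
    rcases heq with rfl | rfl
    · intro h
      rw [fin2_if_eq] at h
      have := key x
      omega
    · intro h
      rw [fin2_if_eq] at h
      have := key y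
      omega
  · -- no monochromatic triple z, z+2, z+4
    intro z ⟨h1, h2⟩
    rw [fin2_if_eq] at h1 h2
    have hM : (0:ℤ) < 4 * K := by linarith
    have e2 : ∀ t : ℤ, (t + 2) / 2 = t / 2 + 1 := by
      intro t
      have := Int.add_mul_ediv_right t 1 (two_ne_zero)
      rw [show t + 2 = t + 1 * 2 by ring] ; rw [this]
    have mono : ∀ a b : ℤ, a ≤ b → a / (4 * K) ≤ b / (4 * K) :=
      fun a b hab => Int.ediv_le_ediv hM hab
    have hup : (z + 4) / (4 * K) ≤ z / (4 * K) + 1 := by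
      have h1 : z + 4 ≤ z + 1 * (4 * K) := by linarith
      have := mono _ _ h1
      rwa [Int.add_mul_ediv_right z 1 (ne_of_gt hM)] at this
    have hlo1 : z / (4 * K) ≤ (z + 2) / (4 * K) := mono _ _ (by linarith)
    have hlo2 : (z + 2) / (4 * K) ≤ (z + 4) / (4 * K) := mono _ _ (by linarith)
    simp only [hd] at h1 h2
    rw [e2 z] at h1
    rw [show z + 4 = (z + 2) + 2 by ring, e2 (z+2)] at h2
    rw [show z + 4 = (z + 2) + 2 by ring] at hup hlo2
    omega
end

section
/- Let a_1 > a_2 > a_3 be integers such that a_2 and a_3 have the same number of factors of 2 in their prime factorizations, let t_1, t_2, t_3 be nonnegative integers, and let S = K^{(a_1)}_{a_1+t_1} ∪ K^{(a_2)}_{a_2+t_2} ∪ K^{(a_3)}_{a_3+t_3} be a vertex disjoint union of cliques. Then any 2-coloring of ℤ with no monochromatic translate of any set in W'(S) is periodic with period 2a_1. -/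
/-!
Complementing a union `X` of some of the three cliques is a cube automorphism `A ↦ A ∆ X`; it
maps the clique `K_i^{(a_i)}` to sets of weight `|X| + a_i` or `|X| - a_i`. Hence no triple
`y ± a₁, y ± a₂, y ± a₃` is monochromatic. At a point `z` with `c (z + a₁) ≠ c (z - a₁)` this forces
`c (z ± a₂) = β` and `c (z ± a₃) = γ` with `β ≠ γ`, and a case analysis shows that this
configuration, with the same `β`, recurs at `z ± 2 a₂` and `z ± 2 a₃`. Equal 2-adic valuations
of `a₂` and `a₃` make `a₃ - a₂` an integer combination of `2 a₂` and `2 a₃`, so the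
configuration recurs at `z + a₃ - a₂`, where it says `γ = β`. So `c (z + a₁) = c (z - a₁)`.
-/

/-- An automorphism of the hypercube `Q_d`: a bijection of the vertex set preserving
adjacency (symmetric difference of size one) in both directions. -/
def IsCubeAutomorphism {d : ℕ} (ψ : Finset (Fin d) → Finset (Fin d)) : Prop :=
  Function.Bijective ψ ∧
    ∀ A B : Finset (Fin d), (symmDiff A B).card = 1 ↔ (symmDiff (ψ A) (ψ B)).card = 1

/-- `W*(S) = {W_d(ψ(S)) : ψ an automorphism of Q_d}`. -/
def WStar {d : ℕ} (S : Set (Finset (Fin d))) : Set (Set ℤ) :=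
  {W | ∃ ψ, IsCubeAutomorphism ψ ∧ W = weightSet (ψ '' S)}

/-- `D` is a translate of `W`. -/
def IsTranslateOf (D W : Set ℤ) : Prop := ∃ j : ℤ, D = (fun x => x + j) '' W

/-- The translates of sets from `𝒲` whose smallest element is `0`. -/
def MinZeroTranslates (𝒲 : Set (Set ℤ)) : Set (Set ℤ) :=
  {D | (∃ W ∈ 𝒲, IsTranslateOf D W) ∧ 0 ∈ D ∧ ∀ x ∈ D, 0 ≤ x}

/-- `W'(S)`: translates of sets from `W*(S)` with smallest element `0` which are
minimal with respect to inclusion. -/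
def WPrime {d : ℕ} (S : Set (Finset (Fin d))) : Set (Set ℤ) :=
  {D | D ∈ MinZeroTranslates (WStar S) ∧
    ∀ D' ∈ MinZeroTranslates (WStar S), D' ⊆ D → D' = D}

/-- A family `𝒟` of sets of integers is `t`-translate-Ramsey: every `t`-coloring of `ℤ`
admits a monochromatic translate `D + j` of some `D ∈ 𝒟`. -/
def TranslateRamseySet (t : ℕ) (𝒟 : Set (Set ℤ)) : Prop :=
  ∀ c : ℤ → Fin t, ∃ D ∈ 𝒟, ∃ j : ℤ, ∀ x ∈ D, ∀ y ∈ D, c (x + j) = c (y + j)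

open Function

lemma isCubeAutomorphism_symmDiff {d : ℕ} (X : Finset (Fin d)) :
    IsCubeAutomorphism (symmDiff · X) :=
  ⟨(symmDiff_left_involutive X).bijective, fun A B => by
    rw [symmDiff_symmDiff_symmDiff_comm, symmDiff_self, symmDiff_bot]⟩

lemma weightSet_union {d : ℕ} (S T : Set (Finset (Fin d))) :
    weightSet (S ∪ T) = weightSet S ∪ weightSet T := by
  ext w
  simp only [weightSet, Set.mem_union, Set.mem_ofPred_eq, or_and_right, exists_or]

lemma weightSet_image_powersetCard_eq_singleton {d a : ℕ} {K : Finset (Fin d)}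
    {f : Finset (Fin d) → Finset (Fin d)} {w : ℤ} (ha : a ≤ K.card)
    (hf : ∀ A ⊆ K, A.card = a → ((f A).card : ℤ) = w) :
    weightSet (f '' ↑(K.powersetCard a)) = {w} := by
  ext v
  simp only [weightSet, Set.mem_image, Finset.mem_coe, Finset.mem_powersetCard,
    Set.mem_ofPred_eq, Set.mem_singleton_iff]
  constructor
  · rintro ⟨_, ⟨A, ⟨hAK, hA⟩, rfl⟩, rfl⟩
    exact hf A hAK hA
  · rintro rfl
    obtain ⟨A, hAK, hA⟩ := Finset.exists_subset_card_eq ha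
    exact ⟨f A, ⟨A, ⟨hAK, hA⟩, rfl⟩, hf A hAK hA⟩

lemma exists_subset_weightSet_image_symmDiff_eq {d a : ℕ} {K : Finset (Fin d)}
    (ha : a ≤ K.card) {e : ℤ} (he : e = a ∨ e = -a) :
    ∃ T ⊆ K, ∀ X : Finset (Fin d), X ∩ K = T →
      weightSet ((symmDiff · X) '' ↑(K.powersetCard a)) = {(X.card : ℤ) + e} := by
  rcases he with rfl | rfl
  · refine ⟨∅, Finset.empty_subset K, fun X hX => ?_⟩
    refine weightSet_image_powersetCard_eq_singleton ha fun A hAK hA => ?_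
    have hAX : Disjoint A X :=
      Finset.disjoint_of_subset_left hAK (Finset.disjoint_iff_inter_eq_empty.2 <| by
        rw [Finset.inter_comm, hX])
    rw [hAX.symmDiff_eq_sup, Finset.sup_eq_union, Finset.card_union_of_disjoint hAX, hA]
    push_cast
    ring
  · refine ⟨K, subset_rfl, fun X hX => ?_⟩
    refine weightSet_image_powersetCard_eq_singleton ha fun A hAK hA => ?_
    have hAX : A ⊆ X := hAK.trans (Finset.inter_eq_right.1 hX)
    rw [symmDiff_of_le hAX, Finset.card_sdiff_of_subset hAX, hA,
      Nat.cast_sub (hA ▸ Finset.card_le_card hAX)]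
    ring

lemma exists_mem_wStar_of_three_cliques {d a₁ a₂ a₃ : ℕ} {K₁ K₂ K₃ : Finset (Fin d)}
    (ha₁ : a₁ ≤ K₁.card) (ha₂ : a₂ ≤ K₂.card) (ha₃ : a₃ ≤ K₃.card)
    (h₁₂ : Disjoint K₁ K₂) (h₁₃ : Disjoint K₁ K₃) (h₂₃ : Disjoint K₂ K₃) {e₁ e₂ e₃ : ℤ}
    (he₁ : e₁ = a₁ ∨ e₁ = -a₁) (he₂ : e₂ = a₂ ∨ e₂ = -a₂) (he₃ : e₃ = a₃ ∨ e₃ = -a₃) :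
    ∃ n : ℤ, {n + e₁, n + e₂, n + e₃} ∈ WStar
      (↑(K₁.powersetCard a₁) ∪ ↑(K₂.powersetCard a₂) ∪ ↑(K₃.powersetCard a₃) :
        Set (Finset (Fin d))) := by
  obtain ⟨T₁, hT₁, hW₁⟩ := exists_subset_weightSet_image_symmDiff_eq ha₁ he₁
  obtain ⟨T₂, hT₂, hW₂⟩ := exists_subset_weightSet_image_symmDiff_eq ha₂ he₂
  obtain ⟨T₃, hT₃, hW₃⟩ := exists_subset_weightSet_image_symmDiff_eq ha₃ he₃
  set X := T₁ ∪ T₂ ∪ T₃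
  rw [Finset.disjoint_left] at h₁₂ h₁₃ h₂₃
  have hX₁ : X ∩ K₁ = T₁ := by grind
  have hX₂ : X ∩ K₂ = T₂ := by grind
  have hX₃ : X ∩ K₃ = T₃ := by grind
  refine ⟨X.card, _, isCubeAutomorphism_symmDiff X, ?_⟩
  rw [Set.image_union, Set.image_union, weightSet_union, weightSet_union, hW₁ X hX₁, hW₂ X hX₂,
    hW₃ X hX₃, Set.insert_eq, Set.insert_eq, Set.union_assoc]

lemma exists_wPrime_subset {d : ℕ} (S : Set (Finset (Fin d))) {D : Set ℤ}
    (hD : D ∈ MinZeroTranslates (WStar S)) (hfin : D.Finite) :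
    ∃ D' ∈ WPrime S, D' ⊆ D := by
  let 𝒟 := {D' | D' ∈ MinZeroTranslates (WStar S) ∧ D' ⊆ D}
  have h𝒟 : 𝒟.Finite := hfin.finite_subsets.subset fun _ h => h.2
  obtain ⟨D', -, ⟨hD'M, hD'D⟩, hmin⟩ := h𝒟.exists_le_minimal (show D ∈ 𝒟 from ⟨hD, subset_rfl⟩)
  exact ⟨D', ⟨hD'M, fun D'' hD'' hsub => le_antisymm hsub
    (hmin ⟨hD'', hsub.trans hD'D⟩ hsub)⟩, hD'D⟩

lemma not_forall_eq_of_mem_wStar {α : Type*} {d : ℕ} {S : Set (Finset (Fin d))} {c : ℤ → α}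
    (hc : ¬ ∃ D ∈ WPrime S, ∃ j : ℤ, ∀ x ∈ D, ∀ y ∈ D, c (x + j) = c (y + j))
    {W : Set ℤ} (hW : W ∈ WStar S) (hfin : W.Finite) (hne : W.Nonempty) (j : ℤ) :
    ¬ ∀ x ∈ W, ∀ y ∈ W, c (x + j) = c (y + j) := by
  intro hmono
  obtain ⟨m, hm, hmin⟩ := W.exists_min_image id hfin hne
  have hD : (· + -m) '' W ∈ MinZeroTranslates (WStar S) :=
    ⟨⟨W, hW, -m, rfl⟩, ⟨m, hm, add_neg_cancel m⟩, by
      rintro _ ⟨w, hw, rfl⟩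
      exact le_add_neg_iff_le.2 (hmin w hw)⟩
  obtain ⟨D', hD', hD'W⟩ := exists_wPrime_subset S hD (hfin.image _)
  refine hc ⟨D', hD', m + j, fun x hx y hy => ?_⟩
  obtain ⟨v, hv, rfl⟩ := hD'W hx
  obtain ⟨w, hw, rfl⟩ := hD'W hy
  simpa only [neg_add_cancel_left, add_assoc] using hmono v hv w hw

def NoMonochromaticSignedTriple {α : Type*} (c : ℤ → α) (a₁ a₂ a₃ : ℤ) : Prop :=
  ∀ y u v w : ℤ, (u = y + a₁ ∨ u = y - a₁) → (v = y + a₂ ∨ v = y - a₂) →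
    (w = y + a₃ ∨ w = y - a₃) → ¬(c u = c v ∧ c v = c w)

lemma noMonochromaticSignedTriple_of_three_cliques {α : Type*} {d a₁ a₂ a₃ : ℕ}
    {K₁ K₂ K₃ : Finset (Fin d)} (ha₁ : a₁ ≤ K₁.card) (ha₂ : a₂ ≤ K₂.card)
    (ha₃ : a₃ ≤ K₃.card) (h₁₂ : Disjoint K₁ K₂) (h₁₃ : Disjoint K₁ K₃) (h₂₃ : Disjoint K₂ K₃)
    {c : ℤ → α} (hc : ¬ ∃ D ∈ WPrime
      (↑(K₁.powersetCard a₁) ∪ ↑(K₂.powersetCard a₂) ∪ ↑(K₃.powersetCard a₃) :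
        Set (Finset (Fin d))), ∃ j : ℤ, ∀ x ∈ D, ∀ y ∈ D, c (x + j) = c (y + j)) :
    NoMonochromaticSignedTriple c a₁ a₂ a₃ := by
  rintro y u v w hu hv hw ⟨huv, hvw⟩
  obtain ⟨n, hW⟩ := exists_mem_wStar_of_three_cliques ha₁ ha₂ ha₃ h₁₂ h₁₃ h₂₃
    (e₁ := u - y) (e₂ := v - y) (e₃ := w - y) (by omega) (by omega) (by omega)
  refine not_forall_eq_of_mem_wStar hc hW (Set.toFinite _) (Set.insert_nonempty _ _) (y - n) ?_
  have hcol : ∀ x ∈ ({n + (u - y), n + (v - y), n + (w - y)} : Set ℤ), c (x + (y - n)) = c u := by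
    have hshift : ∀ t, n + (t - y) + (y - n) = t := fun t => by ring
    rintro x (rfl | rfl | rfl) <;> simp only [hshift]
    exacts [huv.symm, (huv.trans hvw).symm]
  exact fun x hx x' hx' => (hcol x hx).trans (hcol x' hx').symm

lemma Fin.eq_or_eq_of_ne_two {x y : Fin 2} (hxy : x ≠ y) (z : Fin 2) : z = x ∨ z = y := by
  omega

lemma Function.periodic_of_forall_imp {α : Type*} [AddGroup α] {P : α → Prop} {g : α}
    (hadd : ∀ w, P w → P (w + g)) (hsub : ∀ w, P w → P (w - g)) : Periodic P g :=
  fun w => propext ⟨fun h => by simpa using hsub _ h, hadd w⟩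

namespace NoMonochromaticSignedTriple

section

variable {α : Type*} {c : ℤ → α} {a₁ a₂ a₃ : ℤ}

lemma swap (h : NoMonochromaticSignedTriple c a₁ a₂ a₃) :
    NoMonochromaticSignedTriple c a₁ a₃ a₂ :=
  fun y u v w hu hv hw ⟨huv, hvw⟩ => h y u w v hu hw hv ⟨huv.trans hvw, hvw.symm⟩

lemma neg_left (h : NoMonochromaticSignedTriple c a₁ a₂ a₃) :
    NoMonochromaticSignedTriple c (-a₁) a₂ a₃ :=
  fun y u v w hu hv hw => h y u v w (by omega) hv hw

lemma comp_neg (h : NoMonochromaticSignedTriple c a₁ a₂ a₃) :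
    NoMonochromaticSignedTriple (fun t => c (-t)) a₁ a₂ a₃ :=
  fun y u v w hu hv hw => h (-y) (-u) (-v) (-w) (by omega) (by omega) (by omega)

end

variable {c : ℤ → Fin 2} {a₁ a₂ a₃ z : ℤ}

lemma eq_of_mixed (h : NoMonochromaticSignedTriple c a₁ a₂ a₃) (hz : c (z + a₁) ≠ c (z - a₁)) :
    c (z - a₂) = c (z + a₂) ∧ c (z - a₃) = c (z + a₃) ∧ c (z + a₂) ≠ c (z + a₃) := by
  -- every colour occurs at `z ± a₁`, so the colours at `z ± a₂` and `z ± a₃` must differ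
  have hne : ∀ v w, (v = z + a₂ ∨ v = z - a₂) → (w = z + a₃ ∨ w = z - a₃) → c v ≠ c w := by
    intro v w hv hw hvw
    rcases Fin.eq_or_eq_of_ne_two hz (c v) with hu | hu
    · exact h z _ v w (.inl rfl) hv hw ⟨hu.symm, hvw⟩
    · exact h z _ v w (.inr rfl) hv hw ⟨hu.symm, hvw⟩
  have := hne _ _ (.inl rfl) (.inl rfl)
  have := hne _ _ (.inl rfl) (.inr rfl)
  have := hne _ _ (.inr rfl) (.inl rfl)
  have := hne _ _ (.inr rfl) (.inr rfl)
  omega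

lemma mixed_add_two_mul_of_eq (h : NoMonochromaticSignedTriple c a₁ a₂ a₃)
    (hz : c (z + a₁) ≠ c (z - a₁)) (hβ : c (z + a₁) = c (z + a₂)) :
    c (z + 2 * a₂ + a₁) ≠ c (z + 2 * a₂ - a₁) := by
  obtain ⟨hB, hC, hBC⟩ := h.eq_of_mixed hz
  intro hμ
  rcases Fin.eq_or_eq_of_ne_two hBC (c (z + 2 * a₂ + a₁)) with hμβ | hμγ
  · have h₁ : c (z - a₁ + a₂ + a₃) = c (z + a₂) := by
      have := h (z - a₁ + a₃) (z + a₃) (z - a₁ + a₂ + a₃) (z - a₁)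
        (.inl (by ring)) (.inl (by ring)) (.inr (by ring))
      omega
    exact h (z - a₁ + a₂) (z + a₂) (z + 2 * a₂ - a₁) (z - a₁ + a₂ + a₃)
      (.inl (by ring)) (.inl (by ring)) (.inl (by ring)) (by omega)
  · have h₁ : c (z - a₁ + a₂ - a₃) = c (z + a₂) := by
      have := h (z - a₁ - a₃) (z - a₃) (z - a₁ + a₂ - a₃) (z - a₁)
        (.inl (by ring)) (.inl (by ring)) (.inl (by ring))
      omega
    have h₂ : c (z + 2 * a₂ - a₃) = c (z + a₃) := by
      have := h (z + a₂ - a₃) (z - a₁ + a₂ - a₃) (z + 2 * a₂ - a₃) (z + a₂)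
        (.inr (by ring)) (.inl (by ring)) (.inl (by ring))
      omega
    have h₃ : c (z + a₁ + a₂ - a₃) = c (z + a₃) := by
      have := h (z + a₁ + a₂) (z + a₂) (z + a₁) (z + a₁ + a₂ - a₃)
        (.inr (by ring)) (.inr (by ring)) (.inr (by ring))
      omega
    exact h (z + a₁ + 2 * a₂ - a₃) (z + 2 * a₂ - a₃) (z + a₁ + a₂ - a₃) (z + 2 * a₂ + a₁)
      (.inr (by ring)) (.inr (by ring)) (.inl (by ring)) (by omega)

lemma mixed_add_two_mul (h : NoMonochromaticSignedTriple c a₁ a₂ a₃)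
    (hz : c (z + a₁) ≠ c (z - a₁)) : c (z + 2 * a₂ + a₁) ≠ c (z + 2 * a₂ - a₁) := by
  rcases Fin.eq_or_eq_of_ne_two hz (c (z + a₂)) with hβ | hβ
  · exact h.mixed_add_two_mul_of_eq hz hβ.symm
  · -- replacing `a₁` by `-a₁` exchanges the roles of `z + a₁` and `z - a₁`
    have := h.neg_left.mixed_add_two_mul_of_eq (z := z)
      (by rwa [← sub_eq_add_neg, sub_neg_eq_add, ne_comm]) (by rw [← sub_eq_add_neg, hβ])
    rwa [← sub_eq_add_neg, sub_neg_eq_add, ne_comm] at this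

lemma mixed_sub_two_mul (h : NoMonochromaticSignedTriple c a₁ a₂ a₃)
    (hz : c (z + a₁) ≠ c (z - a₁)) : c (z - 2 * a₂ + a₁) ≠ c (z - 2 * a₂ - a₁) := by
  have := h.comp_neg.mixed_add_two_mul (z := -z)
    (by convert hz.symm using 2 <;> ring)
  convert this.symm using 2 <;> ring

lemma periodic_mixed (h : NoMonochromaticSignedTriple c a₁ a₂ a₃) (κ : Fin 2) :
    Periodic (fun w => c (w + a₁) ≠ c (w - a₁) ∧ c (w + a₂) = κ) (2 * a₂) ∧
      Periodic (fun w => c (w + a₁) ≠ c (w - a₁) ∧ c (w + a₂) = κ) (2 * a₃) := by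
  refine ⟨periodic_of_forall_imp ?_ ?_, periodic_of_forall_imp ?_ ?_⟩ <;> rintro w ⟨hw, rfl⟩
  · have hw' := h.mixed_add_two_mul hw
    refine ⟨hw', ?_⟩
    rw [← (h.eq_of_mixed hw').1]
    ring_nf
  · refine ⟨h.mixed_sub_two_mul hw, ?_⟩
    rw [← (h.eq_of_mixed hw).1]
    ring_nf
  · have hw' := h.swap.mixed_add_two_mul hw
    obtain ⟨-, hC', hBC'⟩ := h.eq_of_mixed hw'
    obtain ⟨-, -, hBC⟩ := h.eq_of_mixed hw
    rw [show w + 2 * a₃ - a₃ = w + a₃ by ring] at hC'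
    exact ⟨hw', by omega⟩
  · have hw' := h.swap.mixed_sub_two_mul hw
    obtain ⟨-, hC', hBC'⟩ := h.eq_of_mixed hw'
    obtain ⟨-, hC, hBC⟩ := h.eq_of_mixed hw
    rw [show w - 2 * a₃ + a₃ = w - a₃ by ring] at hC' hBC'
    exact ⟨hw', by omega⟩

lemma add_eq_sub (h : NoMonochromaticSignedTriple c a₁ a₂ a₃)
    (hspan : a₃ - a₂ ∈ Ideal.span {2 * a₂, 2 * a₃}) (z : ℤ) : c (z + a₁) = c (z - a₁) := by
  by_contra hz
  obtain ⟨-, -, hBC⟩ := h.eq_of_mixed hz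
  obtain ⟨m, n, hmn⟩ := Ideal.mem_span_pair.1 hspan
  obtain ⟨h₂, h₃⟩ := h.periodic_mixed (c (z + a₂))
  have hper := (h₂.int_mul m).add_period (h₃.int_mul n) z
  simp only [Int.cast_id, hmn, eq_iff_iff] at hper
  obtain ⟨-, hcol⟩ := hper.2 ⟨hz, trivial⟩
  rw [show z + (a₃ - a₂) + a₂ = z + a₃ by ring] at hcol
  exact hBC hcol.symm

end NoMonochromaticSignedTriple

lemma sub_mem_span_two_mul_of_odd_mul_two_pow {a₂ a₃ : ℕ}
    (h : ∃ p q r : ℕ, Odd p ∧ Odd q ∧ a₂ = p * 2 ^ r ∧ a₃ = q * 2 ^ r) :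
    (a₃ - a₂ : ℤ) ∈ Ideal.span {2 * (a₂ : ℤ), 2 * (a₃ : ℤ)} := by
  obtain ⟨p, q, r, hp, hq, rfl, rfl⟩ := h
  set g : ℤ := ((p : ℤ).gcd q : ℤ)
  obtain ⟨p', hp'⟩ : g ∣ p := Int.gcd_dvd_left _ _
  obtain ⟨q', hq'⟩ : g ∣ q := Int.gcd_dvd_right _ _
  have hodd : ∀ {s t : ℤ}, Odd s → s = g * t → Odd t := fun hs hst =>
    (Int.odd_mul.1 (hst ▸ hs)).2
  obtain ⟨k, hk⟩ := Odd.sub_odd (hodd (by exact_mod_cast hq) hq') (hodd (by exact_mod_cast hp) hp')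
  refine Ideal.mem_span_pair.2 ⟨k * Int.gcdA p q, k * Int.gcdB p q, ?_⟩
  have hbez : g = p * Int.gcdA p q + q * Int.gcdB p q := Int.gcd_eq_gcd_ab _ _
  push_cast
  linear_combination -((2 : ℤ) ^ r * (hq' - hp') + 2 ^ r * g * hk + 2 * k * 2 ^ r * hbez)

theorem three_cliques_periodic_two_a1_general (d a1 a2 a3 t1 t2 t3 : ℕ)
    (hval : ∃ p q r : ℕ, Odd p ∧ Odd q ∧ a2 = p * 2 ^ r ∧ a3 = q * 2 ^ r)
    (K1 K2 K3 : Finset (Fin d))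
    (hK1 : K1.card = a1 + t1) (hK2 : K2.card = a2 + t2) (hK3 : K3.card = a3 + t3)
    (hd12 : Disjoint K1 K2) (hd13 : Disjoint K1 K3) (hd23 : Disjoint K2 K3)
    (S : Set (Finset (Fin d)))
    (hS : S = ↑(K1.powersetCard a1) ∪ ↑(K2.powersetCard a2) ∪ ↑(K3.powersetCard a3))
    (c : ℤ → Fin 2)
    (hc : ¬ ∃ D ∈ WPrime S, ∃ j : ℤ, ∀ x ∈ D, ∀ y ∈ D, c (x + j) = c (y + j)) :
    ∀ x : ℤ, c (x + 2 * (a1 : ℤ)) = c x := by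
  subst hS
  have hN := noMonochromaticSignedTriple_of_three_cliques (by omega : a1 ≤ K1.card)
    (by omega : a2 ≤ K2.card) (by omega : a3 ≤ K3.card) hd12 hd13 hd23 hc
  intro x
  have := hN.add_eq_sub (sub_mem_span_two_mul_of_odd_mul_two_pow hval) (x + a1)
  rwa [add_sub_cancel_right, add_assoc, ← two_mul] at this

/-- Lemma 14 (3cliques2:lem): let `a1 > a2 > a3` be integers such that `a2` and `a3`
have the same number of factors of `2` in their prime factorizations (i.e.
`a2 = p·2^r`, `a3 = q·2^r` with `p, q` odd), let `t1, t2, t3 ≥ 0`, and let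
`S = K^{(a1)} ∪ K^{(a2)} ∪ K^{(a3)}` be a vertex disjoint union of cliques. Then any
`2`-coloring of `ℤ` with no monochromatic translate of any set in `W'(S)` is periodic
with period `2·a1`. -/
theorem three_cliques_periodic_two_a1 (d a1 a2 a3 t1 t2 t3 : ℕ)
    (hgt1 : a2 < a1) (hgt2 : a3 < a2)
    (hval : ∃ p q r : ℕ, Odd p ∧ Odd q ∧ a2 = p * 2 ^ r ∧ a3 = q * 2 ^ r)
    (K1 K2 K3 : Finset (Fin d))
    (hK1 : K1.card = a1 + t1) (hK2 : K2.card = a2 + t2) (hK3 : K3.card = a3 + t3)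
    (hd12 : Disjoint K1 K2) (hd13 : Disjoint K1 K3) (hd23 : Disjoint K2 K3)
    (S : Set (Finset (Fin d)))
    (hS : S = ↑(K1.powersetCard a1) ∪ ↑(K2.powersetCard a2) ∪ ↑(K3.powersetCard a3))
    (c : ℤ → Fin 2)
    (hc : ¬ ∃ D ∈ WPrime S, ∃ j : ℤ, ∀ x ∈ D, ∀ y ∈ D, c (x + j) = c (y + j)) :
    ∀ x : ℤ, c (x + 2 * (a1 : ℤ)) = c x :=
  three_cliques_periodic_two_a1_general d a1 a2 a3 t1 t2 t3 hval K1 K2 K3 hK1 hK2 hK3 hd12 hd13 hd23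
    S hS c hc
end

section
/- Let S = K^{(a_1)}_{a_1+t_1} ∪ ... ∪ K^{(a_s)}_{a_s+t_s} be a vertex disjoint union of s ≥ 2 cliques, let m be a positive integer, and let S^m = K^{(e_1)}_{e_1+u_1} ∪ ... ∪ K^{(e_s)}_{e_s+u_s} be a vertex disjoint union of s cliques with e_i = m·a_i for each i. If t_i ≥ a_i − 1 for each i and S is 2-Ramsey, then S^m is 2-Ramsey (for all values of the u_i's). -/
open Finset


/-- 2-color hypergraph Ramsey property for uniformity `k`. -/
def RamseyP (k : ℕ) : Prop :=
  ∀ L : ℕ, ∃ N : ℕ, ∀ (α : Type) [inst : LinearOrder α] (S : Finset α)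
    (c : Finset α → Fin 2), N ≤ S.card →
    ∃ Y, Y ⊆ S ∧ Y.card = L ∧ ∃ ε : Fin 2, ∀ U ⊆ Y, U.card = k → c U = ε

lemma ramseyP_zero : RamseyP 0 := by
  intro L
  refine ⟨L, ?_⟩
  intro α _ S c hS
  obtain ⟨Y, hYS, hY⟩ := S.exists_subset_card_eq hS
  refine ⟨Y, hYS, hY, c ∅, ?_⟩
  intro U hU hU0
  rw [Finset.card_eq_zero] at hU0
  rw [hU0]

lemma Qlem (k : ℕ) (hk : RamseyP k) :
    ∀ M : ℕ, ∃ N : ℕ, ∀ (α : Type) [inst : LinearOrder α] (S : Finset α)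
      (c : Finset α → Fin 2), N ≤ S.card →
      ∃ Y, Y ⊆ S ∧ Y.card = M ∧ ∃ h : α → Fin 2,
        ∀ U, U ⊆ Y → ∀ hne : U.Nonempty, U.card = k + 1 → c U = h (U.min' hne) := by
  intro M
  induction M with
  | zero =>
    refine ⟨0, ?_⟩
    intro α _ S c _
    refine ⟨∅, empty_subset _, card_empty, fun _ => 0, ?_⟩
    intro U hU hne _
    exact absurd (subset_empty.mp hU) (Finset.nonempty_iff_ne_empty.mp hne)
  | succ M ih =>
    obtain ⟨NQ, hNQ⟩ := ih
    obtain ⟨NA, hNA⟩ := hk NQ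
    refine ⟨NA + 1, ?_⟩
    intro α _ S c hS
    have hSne : S.Nonempty := Finset.card_pos.mp (by omega)
    set x := S.min' hSne with hxdef
    have hxS : x ∈ S := S.min'_mem hSne
    have hS' : NA ≤ (S.erase x).card := by
      rw [Finset.card_erase_of_mem hxS]; omega
    obtain ⟨T, hTS', hTcard, εx, hT⟩ := hNA α (S.erase x) (fun U => c (insert x U)) hS'
    obtain ⟨Y', hY'T, hY'card, h', hh'⟩ := hNQ α T c (le_of_eq hTcard.symm)
    have hxY' : x ∉ Y' := fun hx => (Finset.notMem_erase x S) (hTS' (hY'T hx))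
    refine ⟨insert x Y', ?_, ?_, fun y => if y = x then εx else h' y, ?_⟩
    · intro y hy
      rcases Finset.mem_insert.mp hy with rfl | hy
      · exact hxS
      · exact Finset.erase_subset x S (hTS' (hY'T hy))
    · rw [Finset.card_insert_of_notMem hxY', hY'card]
    · intro U hU hne hcard
      by_cases hxU : x ∈ U
      · have hmin : U.min' hne = x := by
          apply le_antisymm (Finset.min'_le U x hxU)
          apply Finset.le_min'
          intro y hy
          have hyS : y ∈ S := by
            rcases Finset.mem_insert.mp (hU hy) with rfl | h
            · exact hxS
            · exact Finset.erase_subset x S (hTS' (hY'T h))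
          exact S.min'_le y hyS
        rw [hmin]
        show c U = if x = x then εx else h' x
        rw [if_pos rfl]
        have hUx : U = insert x (U.erase x) := (Finset.insert_erase hxU).symm
        have herase : U.erase x ⊆ T := by
          intro y hy
          have hyU := Finset.mem_erase.mp hy
          rcases Finset.mem_insert.mp (hU hyU.2) with rfl | h
          · exact absurd rfl hyU.1
          · exact hY'T h
        have hcerase : (U.erase x).card = k := by
          rw [Finset.card_erase_of_mem hxU, hcard]
          omega
        rw [hUx]
        exact hT _ herase hcerase
      · have hUY' : U ⊆ Y' := by
          intro y hy
          rcases Finset.mem_insert.mp (hU hy) with rfl | h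
          · exact absurd hy hxU
          · exact h
        have hminne : U.min' hne ≠ x := fun h => hxU (h ▸ U.min'_mem hne)
        show c U = if U.min' hne = x then εx else h' (U.min' hne)
        rw [if_neg hminne]
        exact hh' U hUY' hne hcard

lemma fin2_eq_one_of_ne_zero (a : Fin 2) (h : a ≠ 0) : a = 1 := by
  fin_cases a
  · exact absurd rfl h
  · rfl

lemma ramseyP_succ (k : ℕ) (hk : RamseyP k) : RamseyP (k + 1) := by
  intro L
  obtain ⟨N, hN⟩ := Qlem k hk (2 * L)
  refine ⟨N, ?_⟩
  intro α _ S c hS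
  obtain ⟨Y, hYS, hYcard, h, hh⟩ := hN α S c hS
  have hsplit := Finset.card_filter_add_card_filter_not
    (s := Y) (fun y => h y = 0)
  by_cases hL : L ≤ (Y.filter (fun y => h y = 0)).card
  · obtain ⟨Y', hY'sub, hY'card⟩ := Finset.exists_subset_card_eq hL
    refine ⟨Y', fun y hy => hYS (Finset.filter_subset _ _ (hY'sub hy)), hY'card, 0, ?_⟩
    intro U hU hUcard
    have hne : U.Nonempty := Finset.card_pos.mp (by omega)
    have hcU : c U = h (U.min' hne) := by
      apply hh U _ hne hUcard
      exact fun y hy => Finset.filter_subset _ _ (hY'sub (hU hy))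
    rw [hcU]
    exact (Finset.mem_filter.mp (hY'sub (hU (U.min'_mem hne)))).2
  · have hL1 : L ≤ (Y.filter (fun y => ¬ h y = 0)).card := by omega
    obtain ⟨Y', hY'sub, hY'card⟩ := Finset.exists_subset_card_eq hL1
    refine ⟨Y', fun y hy => hYS (Finset.filter_subset _ _ (hY'sub hy)), hY'card, 1, ?_⟩
    intro U hU hUcard
    have hne : U.Nonempty := Finset.card_pos.mp (by omega)
    have hcU : c U = h (U.min' hne) := by
      apply hh U _ hne hUcard
      exact fun y hy => Finset.filter_subset _ _ (hY'sub (hU hy))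
    rw [hcU]
    exact fin2_eq_one_of_ne_zero _ (Finset.mem_filter.mp (hY'sub (hU (U.min'_mem hne)))).2

lemma ramseyP_all (k : ℕ) : RamseyP k := by
  induction k with
  | zero => exact ramseyP_zero
  | succ k ih => exact ramseyP_succ k ih

lemma layered_aux (KK : ℕ) : ∀ j : ℕ, ∃ N : ℕ, ∀ (α : Type) [inst : LinearOrder α]
    (S : Finset α) (c : Finset α → Fin 2), N ≤ S.card →
    ∃ E, E ⊆ S ∧ E.card = KK ∧ ∃ f : ℕ → Fin 2, ∀ U ⊆ E, U.card < j → c U = f U.card := by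
  intro j
  induction j with
  | zero =>
    refine ⟨KK, ?_⟩
    intro α _ S c hS
    obtain ⟨E, hES, hE⟩ := S.exists_subset_card_eq hS
    exact ⟨E, hES, hE, fun _ => 0, fun U _ h => absurd h (Nat.not_lt_zero _)⟩
  | succ j ih =>
    obtain ⟨NB, hNB⟩ := ih
    obtain ⟨NA, hNA⟩ := ramseyP_all j NB
    refine ⟨NA, ?_⟩
    intro α _ S c hS
    obtain ⟨Y, hYS, hYcard, εj, hY⟩ := hNA α S c hS
    obtain ⟨E, hEY, hEcard, f, hf⟩ := hNB α Y c (le_of_eq hYcard.symm)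
    refine ⟨E, hEY.trans hYS, hEcard, fun x => if x = j then εj else f x, ?_⟩
    intro U hUE hUcard
    by_cases hj : U.card = j
    · show c U = if U.card = j then εj else f U.card
      rw [if_pos hj]
      exact hY U (hUE.trans hEY) hj
    · show c U = if U.card = j then εj else f U.card
      rw [if_neg hj]
      exact hf U hUE (by omega)

lemma layered_subsets (KK : ℕ) : ∃ N : ℕ, ∀ (α : Type) [inst : LinearOrder α]
    (S : Finset α) (c : Finset α → Fin 2), N ≤ S.card →
    ∃ E, E ⊆ S ∧ E.card = KK ∧ ∃ f : ℕ → Fin 2, ∀ U ⊆ E, c U = f U.card := by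
  obtain ⟨N, hN⟩ := layered_aux KK (KK + 1)
  refine ⟨N, ?_⟩
  intro α _ S c hS
  obtain ⟨E, hES, hEcard, f, hf⟩ := hN α S c hS
  refine ⟨E, hES, hEcard, f, ?_⟩
  intro U hU
  exact hf U hU (by have := Finset.card_le_card hU; omega)



lemma insert_symmDiff_self {α : Type*} [DecidableEq α] {j : α} {B : Finset α} (h : j ∉ B) :
    symmDiff (insert j B) B = {j} := by
  ext x
  simp only [Finset.mem_symmDiff, Finset.mem_insert, Finset.mem_singleton]
  constructor
  · rintro (⟨(rfl | hx), hnx⟩ | ⟨hx, hnx⟩)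
    · rfl
    · exact absurd hx hnx
    · exact absurd (Or.inr hx) hnx
  · rintro rfl
    exact Or.inl ⟨Or.inl rfl, h⟩

lemma symmDiff_singleton_of_not_mem {α : Type*} [DecidableEq α] {x : α} {s : Finset α}
    (h : x ∉ s) : symmDiff s {x} = insert x s := by
  ext y
  simp only [Finset.mem_symmDiff, Finset.mem_singleton, Finset.mem_insert]
  constructor
  · rintro (⟨hy, hny⟩ | ⟨rfl, _⟩)
    · exact Or.inr hy
    · exact Or.inl rfl
  · rintro (rfl | hy)
    · exact Or.inr ⟨rfl, h⟩
    · exact Or.inl ⟨hy, fun hxy => h (hxy ▸ hy)⟩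

lemma singleton_symmDiff_singleton {α : Type*} [DecidableEq α] {x y : α} (h : x ≠ y) :
    symmDiff ({x} : Finset α) {y} = {x, y} := by
  ext z
  simp only [Finset.mem_symmDiff, Finset.mem_singleton, Finset.mem_insert]
  constructor
  · rintro (⟨rfl, _⟩ | ⟨rfl, _⟩)
    · exact Or.inl rfl
    · exact Or.inr rfl
  · rintro (rfl | rfl)
    · exact Or.inl ⟨rfl, h⟩
    · exact Or.inr ⟨rfl, fun hh => h hh.symm⟩

lemma cube_embedding_structure {d n : ℕ} (ψ : Finset (Fin d) → Finset (Fin n))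
    (hψ : IsCubeEmbedding ψ) :
    ∃ (X₀ : Finset (Fin n)) (g : Fin d → Fin n), Function.Injective g ∧
      ∀ A, ψ A = symmDiff X₀ (A.image g) := by
  obtain ⟨hinj, hedge⟩ := hψ
  have hsingle : ∀ j : Fin d, (symmDiff (ψ {j}) (ψ ∅)).card = 1 := by
    intro j
    apply hedge
    have : symmDiff ({j} : Finset (Fin d)) ∅ = {j} := insert_symmDiff_self (by simp)
    rw [this, Finset.card_singleton]
  choose g hg using fun j => Finset.card_eq_one.mp (hsingle j)
  have hbase : ∀ j : Fin d, ψ {j} = symmDiff (ψ ∅) {g j} := by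
    intro j
    have := hg j
    rw [symmDiff_comm] at this
    calc ψ {j} = symmDiff (ψ ∅) (symmDiff (ψ ∅) (ψ {j})) :=
          (symmDiff_symmDiff_cancel_left _ _).symm
      _ = symmDiff (ψ ∅) {g j} := by rw [this]
  have key : ∀ (A : Finset (Fin d)), ∀ j ∉ A, ψ (insert j A) = symmDiff (ψ A) {g j} := by
    intro A
    induction A using Finset.induction_on with
    | empty =>
      intro j _
      simpa using hbase j
    | @insert k A₀ hkA₀ ih =>
      intro j hj
      have hjk : j ≠ k := fun h => hj (h ▸ Finset.mem_insert_self k A₀)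
      have hjA₀ : j ∉ A₀ := fun h => hj (Finset.mem_insert_of_mem h)
      have hu := ih j hjA₀
      have hv := ih k hkA₀
      -- edge from insert j (insert k A₀) to insert k A₀
      have e1 : (symmDiff (ψ (insert j (insert k A₀))) (ψ (insert k A₀))).card = 1 := by
        apply hedge
        rw [insert_symmDiff_self hj, Finset.card_singleton]
      obtain ⟨x, hx⟩ := Finset.card_eq_one.mp e1
      have hWv : ψ (insert j (insert k A₀)) = symmDiff (ψ (insert k A₀)) {x} := by
        calc ψ (insert j (insert k A₀))
            = symmDiff (ψ (insert k A₀)) (symmDiff (ψ (insert k A₀)) (ψ (insert j (insert k A₀)))) :=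
              (symmDiff_symmDiff_cancel_left _ _).symm
          _ = _ := by rw [symmDiff_comm (ψ (insert k A₀)) (ψ (insert j (insert k A₀))), hx]
      -- edge from insert j (insert k A₀) = insert k (insert j A₀) to insert j A₀
      have hcomm : insert j (insert k A₀) = insert k (insert j A₀) := Finset.insert_comm j k A₀
      have hkjA : k ∉ insert j A₀ := by
        simp only [Finset.mem_insert]
        push_neg
        exact ⟨fun h => hjk h.symm, hkA₀⟩
      have e2 : (symmDiff (ψ (insert j (insert k A₀))) (ψ (insert j A₀))).card = 1 := by
        apply hedge
        rw [hcomm, insert_symmDiff_self hkjA, Finset.card_singleton]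
      obtain ⟨y, hy⟩ := Finset.card_eq_one.mp e2
      have hWu : ψ (insert j (insert k A₀)) = symmDiff (ψ (insert j A₀)) {y} := by
        calc ψ (insert j (insert k A₀))
            = symmDiff (ψ (insert j A₀)) (symmDiff (ψ (insert j A₀)) (ψ (insert j (insert k A₀)))) :=
              (symmDiff_symmDiff_cancel_left _ _).symm
          _ = _ := by rw [symmDiff_comm (ψ (insert j A₀)) (ψ (insert j (insert k A₀))), hy]
      -- x ≠ g k
      have hWne : ψ (insert j (insert k A₀)) ≠ ψ A₀ := by
        intro h
        have := hinj h
        have : j ∈ A₀ := this ▸ Finset.mem_insert_self j (insert k A₀)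
        exact hjA₀ this
      have hxgk : x ≠ g k := by
        intro h
        apply hWne
        rw [hWv, hv, h, symmDiff_assoc, symmDiff_self, symmDiff_bot]
      -- g j ≠ g k
      have hgjk : g j ≠ g k := by
        intro h
        have : ψ {j} = ψ {k} := by rw [hbase j, hbase k, h]
        have := hinj this
        exact hjk (Finset.singleton_injective this)
      -- equation
      have heq : symmDiff ({g k} : Finset (Fin n)) {x} = symmDiff ({g j} : Finset (Fin n)) {y} := by
        have h1 : symmDiff (ψ A₀) (symmDiff ({g k} : Finset (Fin n)) {x})
            = symmDiff (ψ A₀) (symmDiff ({g j} : Finset (Fin n)) {y}) := by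
          rw [← symmDiff_assoc, ← symmDiff_assoc, ← hv, ← hu, ← hWv, ← hWu]
        exact symmDiff_right_injective _ h1
      -- y ≠ g j
      have hygj : y ≠ g j := by
        intro h
        apply hWne
        rw [hWu, hu, h, symmDiff_assoc, symmDiff_self, symmDiff_bot]
      have hpair : ({g k, x} : Finset (Fin n)) = {g j, y} := by
        rw [← singleton_symmDiff_singleton (fun h => hxgk h.symm),
          ← singleton_symmDiff_singleton (fun h => hygj h.symm), heq]
      have hgjx : g j = x := by
        have : g j ∈ ({g k, x} : Finset (Fin n)) := by
          rw [hpair]; exact Finset.mem_insert_self _ _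
        rcases Finset.mem_insert.mp this with h | h
        · exact absurd h hgjk
        · exact Finset.mem_singleton.mp h
      rw [hWv, hgjx]
  refine ⟨ψ ∅, g, ?_, ?_⟩
  · intro j k h
    by_contra hne
    have : ψ {j} = ψ {k} := by rw [hbase j, hbase k, h]
    exact hne (Finset.singleton_injective (hinj this))
  · intro A
    induction A using Finset.induction_on with
    | empty =>
      rw [Finset.image_empty, ← Finset.bot_eq_empty (α := Fin n), symmDiff_bot]
    | @insert j A₀ hjA₀ ih =>
      have hginj : Function.Injective g := by
        intro j' k' h
        by_contra hne
        have : ψ {j'} = ψ {k'} := by rw [hbase j', hbase k', h]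
        exact hne (Finset.singleton_injective (hinj this))
      have hgj : g j ∉ A₀.image g := by
        intro h
        obtain ⟨a, ha, hga⟩ := Finset.mem_image.mp h
        exact hjA₀ (hginj hga ▸ ha)
      rw [key A₀ j hjA₀, ih, Finset.image_insert, symmDiff_assoc,
        symmDiff_singleton_of_not_mem hgj]



lemma isCubeEmbedding_symmDiff {d n : ℕ} (X : Finset (Fin n)) (g : Fin d → Fin n)
    (hg : Function.Injective g) :
    IsCubeEmbedding (fun A => symmDiff X (A.image g)) := by
  constructor
  · intro A B hAB
    simp only at hAB
    have h1 : A.image g = B.image g := symmDiff_right_injective X hAB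
    exact Finset.image_injective hg h1
  · intro A B h1
    have hkey : symmDiff (symmDiff X (A.image g)) (symmDiff X (B.image g))
        = (symmDiff A B).image g := by
      rw [Finset.image_symmDiff _ _ hg]
      ext z
      simp only [Finset.mem_symmDiff]
      tauto
    show (symmDiff (symmDiff X (A.image g)) (symmDiff X (B.image g))).card = 1
    rw [hkey, Finset.card_image_of_injective _ hg]
    exact h1

lemma exists_embedding_finsets {α β : Type*} (s : Finset α) (t : Finset β)
    (h : s.card ≤ t.card) :
    ∃ e : {x // x ∈ s} → {y // y ∈ t}, Function.Injective e :=
  ⟨fun x => t.equivFin.symm (Fin.castLE h (s.equivFin x)),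
   fun a b hab => s.equivFin.injective (Fin.castLE_injective h (t.equivFin.symm.injective hab))⟩

lemma exists_good_injection {n d' : ℕ} (D₁ D₂ : Finset (Fin d')) (T₁ T₂ : Finset (Fin n))
    (hD : Disjoint D₁ D₂) (hT : Disjoint T₁ T₂)
    (h1 : D₁.card ≤ T₁.card) (h2 : D₂.card ≤ T₂.card)
    (hroom : d' + T₁.card + T₂.card ≤ n) :
    ∃ g : Fin d' → Fin n, Function.Injective g ∧ (∀ x ∈ D₁, g x ∈ T₁) ∧ (∀ x ∈ D₂, g x ∈ T₂) := by
  classical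
  set T₃ : Finset (Fin n) := Finset.univ \ (T₁ ∪ T₂) with hT₃
  have hT₃card : d' ≤ T₃.card := by
    have hle : (T₁ ∪ T₂).card ≤ T₁.card + T₂.card := Finset.card_union_le _ _
    have h3 : T₃.card = n - (T₁ ∪ T₂).card := by
      rw [hT₃, Finset.card_sdiff_of_subset (Finset.subset_univ _), Finset.card_univ, Fintype.card_fin]
    omega
  set D₃ : Finset (Fin d') := Finset.univ \ (D₁ ∪ D₂) with hD₃
  have hD₃le : D₃.card ≤ T₃.card := by
    have : D₃.card ≤ d' := by
      have h := Finset.card_le_univ D₃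
      rw [Fintype.card_fin] at h
      exact h
    omega
  obtain ⟨e₁, he₁⟩ := exists_embedding_finsets D₁ T₁ h1
  obtain ⟨e₂, he₂⟩ := exists_embedding_finsets D₂ T₂ h2
  obtain ⟨e₃, he₃⟩ := exists_embedding_finsets D₃ T₃ hD₃le
  have m1 : ∀ z, ((e₁ z : {y // y ∈ T₁}) : Fin n) ∈ T₁ := fun z => (e₁ z).2
  have m2 : ∀ z, ((e₂ z : {y // y ∈ T₂}) : Fin n) ∈ T₂ := fun z => (e₂ z).2
  have m3 : ∀ z, ((e₃ z : {y // y ∈ T₃}) : Fin n) ∈ T₃ := fun z => (e₃ z).2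
  have d12 : ∀ v : Fin n, v ∈ T₁ → v ∈ T₂ → False :=
    fun v hv1 hv2 => Finset.disjoint_left.mp hT hv1 hv2
  have d13 : ∀ v : Fin n, v ∈ T₁ → v ∈ T₃ → False := by
    intro v hv1 hv3
    exact (Finset.mem_sdiff.mp hv3).2 (Finset.mem_union_left _ hv1)
  have d23 : ∀ v : Fin n, v ∈ T₂ → v ∈ T₃ → False := by
    intro v hv2 hv3
    exact (Finset.mem_sdiff.mp hv3).2 (Finset.mem_union_right _ hv2)
  refine ⟨fun x => if hx1 : x ∈ D₁ then (e₁ ⟨x, hx1⟩ : Fin n) else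
    if hx2 : x ∈ D₂ then (e₂ ⟨x, hx2⟩ : Fin n) else
      (e₃ ⟨x, by rw [hD₃]; simp [hx1, hx2]⟩ : Fin n), ?_, ?_, ?_⟩
  · intro x y hxy
    dsimp only at hxy
    by_cases hx1 : x ∈ D₁
    · rw [dif_pos hx1] at hxy
      by_cases hy1 : y ∈ D₁
      · rw [dif_pos hy1] at hxy
        have := he₁ (Subtype.coe_injective hxy)
        exact congrArg Subtype.val this
      · rw [dif_neg hy1] at hxy
        by_cases hy2 : y ∈ D₂
        · rw [dif_pos hy2] at hxy
          exact absurd (m2 ⟨y, hy2⟩) (fun hmem => d12 _ (hxy ▸ m1 ⟨x, hx1⟩) hmem)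
        · rw [dif_neg hy2] at hxy
          exact absurd (m3 _) (fun hmem => d13 _ (hxy ▸ m1 ⟨x, hx1⟩) hmem)
    · rw [dif_neg hx1] at hxy
      by_cases hx2 : x ∈ D₂
      · rw [dif_pos hx2] at hxy
        by_cases hy1 : y ∈ D₁
        · rw [dif_pos hy1] at hxy
          exact absurd (m1 ⟨y, hy1⟩) (fun hmem => d12 _ hmem (hxy ▸ m2 ⟨x, hx2⟩))
        · rw [dif_neg hy1] at hxy
          by_cases hy2 : y ∈ D₂
          · rw [dif_pos hy2] at hxy
            have := he₂ (Subtype.coe_injective hxy)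
            exact congrArg Subtype.val this
          · rw [dif_neg hy2] at hxy
            exact absurd (m3 _) (fun hmem => d23 _ (hxy ▸ m2 ⟨x, hx2⟩) hmem)
      · rw [dif_neg hx2] at hxy
        by_cases hy1 : y ∈ D₁
        · rw [dif_pos hy1] at hxy
          exact absurd (m1 ⟨y, hy1⟩) (fun hmem => d13 _ hmem (hxy ▸ m3 _))
        · rw [dif_neg hy1] at hxy
          by_cases hy2 : y ∈ D₂
          · rw [dif_pos hy2] at hxy
            exact absurd (m2 ⟨y, hy2⟩) (fun hmem => d23 _ hmem (hxy ▸ m3 _))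
          · rw [dif_neg hy2] at hxy
            have := he₃ (Subtype.coe_injective hxy)
            exact congrArg Subtype.val this
  · intro x hx
    dsimp only
    rw [dif_pos hx]
    exact m1 _
  · intro x hx
    dsimp only
    rw [dif_neg (Finset.disjoint_right.mp hD hx), dif_pos hx]
    exact m2 _

section Star

variable {d s : ℕ} (a tt : Fin s → ℕ) (K : Fin s → Finset (Fin d))

lemma star_lemma (hK : ∀ i, (K i).card = a i + tt i) (htt : ∀ i, a i ≤ tt i + 1)
    (N : ℕ) (h : ℕ → Fin 2) (ε : Fin 2)
    (hcopy : ContainsCopy (⋃ i, (((K i).powersetCard (a i) : Finset (Finset (Fin d))) : Set (Finset (Fin d))))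
      {A : Finset (Fin N) | h A.card = ε}) :
    ∃ ℓ : ℕ, ℓ ≤ N ∧ ∀ i, h (ℓ + a i) = ε ∨ (a i ≤ ℓ ∧ h (ℓ - a i) = ε) := by
  classical
  obtain ⟨ψ, hemb, hmono⟩ := hcopy
  obtain ⟨X₀, g, hg, hstruct⟩ := cube_embedding_structure ψ hemb
  refine ⟨X₀.card, ?_, ?_⟩
  · have hle := Finset.card_le_univ X₀
    rwa [Fintype.card_fin] at hle
  intro i
  set Ki' := (K i).filter (fun x => g x ∈ X₀) with hKi'
  have hsub : Ki' ⊆ K i := Finset.filter_subset _ _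
  by_cases hw : Ki'.card ≤ tt i
  · left
    have hcard : a i ≤ ((K i) \ Ki').card := by
      rw [Finset.card_sdiff_of_subset hsub, hK i]
      omega
    obtain ⟨T, hT1, hT2⟩ := Finset.exists_subset_card_eq hcard
    have hTK : T ⊆ K i := hT1.trans Finset.sdiff_subset
    have hmem : (T : Finset (Fin d)) ∈ ⋃ j, (↑((K j).powersetCard (a j)) : Set (Finset (Fin d))) :=
      Set.mem_iUnion.mpr ⟨i, Finset.mem_coe.mpr (Finset.mem_powersetCard.mpr ⟨hTK, hT2⟩)⟩
    have hc := hmono T hmem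
    simp only [Set.mem_setOf_eq] at hc
    rw [hstruct T] at hc
    have hdisj : Disjoint X₀ (T.image g) := by
      rw [Finset.disjoint_right]
      intro x hx
      obtain ⟨y, hyT, rfl⟩ := Finset.mem_image.mp hx
      have hy' := hT1 hyT
      have := (Finset.mem_sdiff.mp hy').2
      intro hgX
      exact this (Finset.mem_filter.mpr ⟨(Finset.mem_sdiff.mp hy').1, hgX⟩)
    have hcardeq : (symmDiff X₀ (T.image g)).card = X₀.card + a i := by
      rw [hdisj.symmDiff_eq_sup, Finset.sup_eq_union, Finset.card_union_of_disjoint hdisj,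
        Finset.card_image_of_injective _ hg, hT2]
    rwa [hcardeq] at hc
  · right
    have haw : a i ≤ Ki'.card := by
      have := htt i
      omega
    obtain ⟨T, hT1, hT2⟩ := Finset.exists_subset_card_eq haw
    have hTK : T ⊆ K i := hT1.trans hsub
    have hmem : (T : Finset (Fin d)) ∈ ⋃ j, (↑((K j).powersetCard (a j)) : Set (Finset (Fin d))) :=
      Set.mem_iUnion.mpr ⟨i, Finset.mem_coe.mpr (Finset.mem_powersetCard.mpr ⟨hTK, hT2⟩)⟩
    have hc := hmono T hmem
    simp only [Set.mem_setOf_eq] at hc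
    rw [hstruct T] at hc
    have himsub : T.image g ⊆ X₀ := by
      intro x hx
      obtain ⟨y, hyT, rfl⟩ := Finset.mem_image.mp hx
      exact (Finset.mem_filter.mp (hT1 hyT)).2
    have hcardle : a i ≤ X₀.card := by
      rw [← hT2, ← Finset.card_image_of_injective T hg]
      exact Finset.card_le_card himsub
    refine ⟨hcardle, ?_⟩
    have hcardeq : (symmDiff X₀ (T.image g)).card = X₀.card - a i := by
      rw [symmDiff_of_ge himsub, Finset.card_sdiff_of_subset himsub,
        Finset.card_image_of_injective _ hg, hT2]
    rwa [hcardeq] at hc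

end Star

/-- Proposition 17(b) (pari:prop(b)): let `S = K^{(a_1)}_{a_1+t_1} ∪ … ∪ K^{(a_s)}_{a_s+t_s}`
be a vertex disjoint union of `s ≥ 2` cliques, and for a positive integer `m` let
`S^m = K^{(e_1)}_{e_1+u_1} ∪ … ∪ K^{(e_s)}_{e_s+u_s}` be a vertex disjoint union of `s`
cliques with `e i = m * a i`. If `t i ≥ a i - 1` for each `i` and `S` is `2`-Ramsey,
then so is `S^m` (for all values of the `u i`'s). -/
theorem ramsey_multiple_of_ramsey (s : ℕ) (hs : 2 ≤ s) (m : ℕ) (hm : 0 < m)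
    (a tt u : Fin s → ℕ) (d d' : ℕ)
    (K : Fin s → Finset (Fin d)) (K' : Fin s → Finset (Fin d'))
    (hK : ∀ i, (K i).card = a i + tt i)
    (hK' : ∀ i, (K' i).card = m * a i + u i)
    (hdisj : ∀ i j, i ≠ j → Disjoint (K i) (K j))
    (hdisj' : ∀ i j, i ≠ j → Disjoint (K' i) (K' j))
    (htt : ∀ i, a i ≤ tt i + 1)
    (hS : IsRamsey 2 d (⋃ i, ↑((K i).powersetCard (a i)))) :
    IsRamsey 2 d' (⋃ i, ↑((K' i).powersetCard (m * a i))) := by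
  classical
  obtain ⟨n₀, hn₀⟩ := hS
  set B : ℕ := ∑ i, (m * a i + u i) with hB
  set KK : ℕ := m * n₀ + 2 * B with hKK
  obtain ⟨N₁, hN₁⟩ := layered_subsets KK
  refine ⟨N₁ + d' + KK, ?_⟩
  intro n hn c
  have hcard : N₁ ≤ (Finset.univ : Finset (Fin n)).card := by
    rw [Finset.card_univ, Fintype.card_fin]
    omega
  obtain ⟨E, hEuniv, hEcard, f, hf⟩ := hN₁ (Fin n) Finset.univ c hcard
  set h : ℕ → Fin 2 := fun x => f (m * x + B) with hh
  obtain ⟨ε, hcopy⟩ := hn₀ n₀ le_rfl (fun A => h A.card)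
  obtain ⟨ℓ, hℓN, hprop⟩ := star_lemma a tt K hK htt n₀ h ε hcopy
  have hml : m * ℓ ≤ m * n₀ := Nat.mul_le_mul le_rfl hℓN
  have hlstarE : m * ℓ + B ≤ KK := by omega
  obtain ⟨X, hXE, hXcard⟩ := Finset.exists_subset_card_eq
    (show m * ℓ + B ≤ E.card by rw [hEcard]; omega)
  set Ipos := Finset.univ.filter (fun i : Fin s => h (ℓ + a i) = ε) with hIpos
  set Ineg := Finset.univ.filter (fun i : Fin s => ¬ h (ℓ + a i) = ε) with hIneg
  have hsum : ∀ (I : Finset (Fin s)), (I.biUnion K').card ≤ B := by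
    intro I
    rw [Finset.card_biUnion (fun i _ j _ hij => hdisj' i j hij)]
    calc ∑ i ∈ I, (K' i).card = ∑ i ∈ I, (m * a i + u i) := by
          exact Finset.sum_congr rfl (fun i _ => hK' i)
      _ ≤ B := Finset.sum_le_sum_of_subset (Finset.subset_univ I)
  have hDneg : (Ineg.biUnion K').card ≤ X.card := by
    rw [hXcard]
    have := hsum Ineg
    omega
  have hDpos : (Ipos.biUnion K').card ≤ (E \ X).card := by
    rw [Finset.card_sdiff_of_subset hXE, hEcard, hXcard]
    have := hsum Ipos
    omega
  have hDdisj : Disjoint (Ineg.biUnion K') (Ipos.biUnion K') := by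
    rw [Finset.disjoint_left]
    intro x hx1 hx2
    obtain ⟨i, hi, hxi⟩ := Finset.mem_biUnion.mp hx1
    obtain ⟨j, hj, hxj⟩ := Finset.mem_biUnion.mp hx2
    have hij : i ≠ j := by
      rintro rfl
      exact (Finset.mem_filter.mp hi).2 (Finset.mem_filter.mp hj).2
    exact Finset.disjoint_left.mp (hdisj' i j hij) hxi hxj
  have hTdisj : Disjoint X (E \ X) := Finset.disjoint_sdiff
  have hroom : d' + X.card + (E \ X).card ≤ n := by
    rw [Finset.card_sdiff_of_subset hXE, hEcard, hXcard]
    omega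
  obtain ⟨g, hg, hgneg, hgpos⟩ := exists_good_injection (Ineg.biUnion K') (Ipos.biUnion K')
    X (E \ X) hDdisj hTdisj hDneg hDpos hroom
  refine ⟨ε, fun A => symmDiff X (A.image g), isCubeEmbedding_symmDiff X g hg, ?_⟩
  intro A hA
  obtain ⟨Fi, ⟨i, rfl⟩, hAi⟩ := hA
  have hAK := Finset.mem_powersetCard.mp (Finset.mem_coe.mp hAi)
  show c (symmDiff X (A.image g)) = ε
  by_cases hpos : h (ℓ + a i) = ε
  · have hsubD : A ⊆ Ipos.biUnion K' :=
      hAK.1.trans (Finset.subset_biUnion_of_mem K'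
        (Finset.mem_filter.mpr ⟨Finset.mem_univ i, hpos⟩))
    have him : A.image g ⊆ E \ X := by
      intro x hx
      obtain ⟨y, hy, rfl⟩ := Finset.mem_image.mp hx
      exact hgpos y (hsubD hy)
    have hdisjXA : Disjoint X (A.image g) := by
      rw [Finset.disjoint_right]
      intro x hx
      exact (Finset.mem_sdiff.mp (him hx)).2
    have heq : symmDiff X (A.image g) = X ∪ A.image g := by
      rw [hdisjXA.symmDiff_eq_sup, Finset.sup_eq_union]
    rw [heq]
    have hsubE : X ∪ A.image g ⊆ E :=
      Finset.union_subset hXE (him.trans Finset.sdiff_subset)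
    rw [hf _ hsubE]
    have hcardeq : (X ∪ A.image g).card = m * (ℓ + a i) + B := by
      rw [Finset.card_union_of_disjoint hdisjXA, hXcard,
        Finset.card_image_of_injective _ hg, hAK.2]
      ring
    rw [hcardeq]
    exact hpos
  · obtain ⟨haℓ, hneg⟩ := (hprop i).resolve_left hpos
    have hsubD : A ⊆ Ineg.biUnion K' :=
      hAK.1.trans (Finset.subset_biUnion_of_mem K'
        (Finset.mem_filter.mpr ⟨Finset.mem_univ i, hpos⟩))
    have him : A.image g ⊆ X := by
      intro x hx
      obtain ⟨y, hy, rfl⟩ := Finset.mem_image.mp hx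
      exact hgneg y (hsubD hy)
    have heq : symmDiff X (A.image g) = X \ A.image g := symmDiff_of_ge him
    rw [heq, hf _ (Finset.sdiff_subset.trans hXE)]
    have hcardeq : (X \ A.image g).card = m * (ℓ - a i) + B := by
      rw [Finset.card_sdiff_of_subset him, hXcard, Finset.card_image_of_injective _ hg, hAK.2]
      have hmm : m * ℓ = m * (ℓ - a i) + m * a i := by
        rw [← Nat.mul_add]
        congr 1
        omega
      omega
    rw [hcardeq]
    exact hneg
end
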